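/- arXiv:1607.01006 — 8 statements merged into one kernel-verified Lean document; each statement's English description precedes it below -/
import Mathlib

section
/- For every nonnegative integer m, the alternating binomial sum with harmonic numbers satisfies ∑_{k=0}^{2m} (-2)^k C(2m,k) H_k = 2H_{2m} - H_m, where H_j = ∑_{i=1}^j 1/i denotes the j-th harmonic number. -/
open Finset

noncomputable def H (n : ℕ) : ℝ := ∑ i ∈ Finset.range n, (1:ℝ)/(i+1)

noncomputable def S (n : ℕ) : ℝ :=
  ∑ k ∈ Finset.range (n+1), (-2:ℝ)^k * (n.choose k : ℝ) * H k

noncomputable def T (n : ℕ) : ℝ :=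
  ∑ i ∈ Finset.range (n+1), (-2:ℝ)^i * (n.choose i : ℝ) / (i+1)

lemma H_zero : H 0 = 0 := by simp [H]

lemma H_succ (n : ℕ) : H (n+1) = H n + 1/(n+1) := by
  simp [H, Finset.sum_range_succ]

lemma binsum (n : ℕ) : ∑ k ∈ range (n+1), (-2:ℝ)^k * (n.choose k : ℝ) = (-1:ℝ)^n := by
  have h := add_pow (-2:ℝ) 1 n
  norm_num at h
  rw [← h]

lemma Tval (n : ℕ) : T n = ((-1:ℝ)^(n+1) - 1) / (-2*(n+1)) := by
  have key : ((n:ℝ)+1) * T n = ((-1:ℝ)^(n+1) - 1) / (-2) := by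
    have h1 : ∑ k ∈ range (n+2), (-2:ℝ)^k * ((n+1).choose k : ℝ) = (-1:ℝ)^(n+1) :=
      binsum (n+1)
    rw [Finset.sum_range_succ'] at h1
    simp only [Nat.choose_zero_right, Nat.cast_one, pow_zero, one_mul, mul_one] at h1
    have h2 : ∑ i ∈ range (n+1), (-2:ℝ)^(i+1) * ((n+1).choose (i+1) : ℝ)
        = (-1:ℝ)^(n+1) - 1 := by linarith
    rw [T, Finset.mul_sum]
    have h3 : ∀ i ∈ range (n+1),
        ((n:ℝ)+1) * ((-2:ℝ)^i * (n.choose i : ℝ) / (i+1))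
          = ((-2:ℝ)^(i+1) * ((n+1).choose (i+1) : ℝ)) / (-2) := by
      intro i _
      have hc : ((n+1) * n.choose i : ℕ) = ((n+1).choose (i+1) * (i+1) : ℕ) := by
        rw [← Nat.add_one_mul_choose_eq]
      have hc' : ((n:ℝ)+1) * (n.choose i : ℝ) = ((n+1).choose (i+1) : ℝ) * ((i:ℝ)+1) := by
        exact_mod_cast congrArg (Nat.cast : ℕ → ℝ) hc
      have hi : ((i:ℝ)+1) ≠ 0 := by positivity
      rw [pow_succ]
      field_simp
      linear_combination hc'
    rw [Finset.sum_congr rfl h3, ← Finset.sum_div, h2]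
  have hn : ((n:ℝ)+1) ≠ 0 := by positivity
  field_simp at key ⊢
  linarith [key]

lemma Srec (n : ℕ) : S (n+1) = -S n - 2 * T n := by
  have hS : S (n+1) = ∑ i ∈ range (n+1),
      (-2:ℝ)^(i+1) * ((n+1).choose (i+1) : ℝ) * H (i+1) := by
    rw [S, Finset.sum_range_succ']
    simp [H_zero]
  have expand : ∀ i ∈ range (n+1),
      (-2:ℝ)^(i+1) * ((n+1).choose (i+1) : ℝ) * H (i+1)
        = (-2) * ((-2:ℝ)^i * (n.choose i : ℝ) * H i)
          + (-2) * ((-2:ℝ)^i * (n.choose i : ℝ) / (i+1))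
          + ((-2:ℝ)^(i+1) * (n.choose (i+1) : ℝ) * H (i+1)) := by
    intro i _
    rw [Nat.choose_succ_succ', H_succ]
    push_cast
    have hi : ((i:ℝ)+1) ≠ 0 := by positivity
    field_simp
    ring
  rw [hS, Finset.sum_congr rfl expand]
  rw [Finset.sum_add_distrib, Finset.sum_add_distrib, ← Finset.mul_sum, ← Finset.mul_sum]
  have hA3 : ∑ i ∈ range (n+1), (-2:ℝ)^(i+1) * (n.choose (i+1) : ℝ) * H (i+1) = S n := by
    have := Finset.sum_range_succ' (fun k => (-2:ℝ)^k * (n.choose k : ℝ) * H k) (n+1)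
    rw [Finset.sum_range_succ] at this
    simp [H_zero, Nat.choose_succ_self] at this
    rw [← this]; rfl
  rw [hA3, S, T]
  ring

lemma Skey (m : ℕ) : S (2*m) = 2 * H (2*m) - H m := by
  induction m with
  | zero => simp [S, H_zero]
  | succ m ih =>
    have e1 : 2*(m+1) = (2*m+1)+1 := by ring
    rw [e1, Srec, Srec, Tval, Tval]
    have h1 : ((-1:ℝ))^(2*m+1) = -1 := by
      rw [pow_succ, pow_mul]; norm_num
    have h2 : ((-1:ℝ))^(2*m+1+1) = 1 := by
      rw [pow_succ, h1]; norm_num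
    have hH2 : H (2*m+1+1) = H (2*m) + 1/(2*(m:ℝ)+1) + 1/(2*(m:ℝ)+2) := by
      rw [H_succ, H_succ]; push_cast; ring
    have hHm : H (m+1) = H m + 1/(m+1) := H_succ m
    rw [hH2, hHm, h1, h2, ih]
    have hm1 : ((2:ℝ)*m+1) ≠ 0 := by positivity
    have hm2 : ((2:ℝ)*m+2) ≠ 0 := by positivity
    have hm3 : ((m:ℝ)+1) ≠ 0 := by positivity
    push_cast
    field_simp
    ring

theorem stmt0 (m : ℕ) :
    ∑ k ∈ Finset.range (2*m+1), (-2:ℝ)^k * ((2*m).choose k : ℝ) * H k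
      = 2 * H (2*m) - H m := Skey m
end

section
/- For every nonnegative integer n, ∑_{k=0}^{n} C(2n-k, n) · H_k^{(2)} = (1/2) · C(2n+1, n) · ( H_{2n+1}^{(2)} - (H_{2n+1} - H_n)^2 ), where H_j^{(2)} = ∑_{i=1}^j 1/i^2 and H_j = ∑_{i=1}^j 1/i. -/
open Finset

noncomputable def H2 (n : ℕ) : ℝ := ∑ i ∈ Finset.range n, (1:ℝ)/((i:ℝ)+1)^2

noncomputable def rr (n k : ℕ) : ℝ := ((n.choose k : ℕ) : ℝ) / (((2*n+1).choose k : ℕ) : ℝ)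

lemma chooseR_ne (N k : ℕ) (h : k ≤ N) : ((N.choose k : ℕ) : ℝ) ≠ 0 := by
  exact_mod_cast (Nat.choose_pos h).ne'

lemma castA (N k : ℕ) (h : k ≤ N) :
    ((N.choose (k+1) : ℕ) : ℝ) * ((k:ℝ)+1) = ((N.choose k : ℕ) : ℝ) * ((N:ℝ) - (k:ℝ)) := by
  rw [show ((N:ℝ) - (k:ℝ)) = ((N - k : ℕ):ℝ) from (Nat.cast_sub h).symm]
  exact_mod_cast Nat.choose_succ_right_eq N k

lemma castB (N k : ℕ) (h : k ≤ N + 1) :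
    ((N.choose k : ℕ) : ℝ) * ((N:ℝ)+1) = (((N+1).choose k : ℕ) : ℝ) * ((N:ℝ)+1 - (k:ℝ)) := by
  rw [show ((N:ℝ)+1 - (k:ℝ)) = ((N + 1 - k : ℕ):ℝ) by rw [Nat.cast_sub h]; push_cast; ring]
  exact_mod_cast Nat.choose_mul_succ_eq N k

/-- Gosper-style telescoping for `∑ C(n+1,i)/C(2n+1,i)`. -/
lemma gq (n : ℕ) : ∀ m, m ≤ n + 1 →
    ∑ i ∈ range m, (((n+1).choose i : ℕ) : ℝ) / (((2*n+1).choose i : ℕ) : ℝ)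
      = (((m:ℝ) - (2*(n:ℝ)+2)) / ((n:ℝ)+1)) * (((n+1).choose m : ℕ) : ℝ)
          / (((2*n+1).choose m : ℕ) : ℝ) + 2 := by
  intro m
  induction m with
  | zero =>
      intro _
      simp only [Finset.sum_range_zero, Nat.choose_zero_right, Nat.cast_one, Nat.cast_zero]
      have hn : (n:ℝ) + 1 ≠ 0 := by positivity
      field_simp
      ring
  | succ m ih =>
      intro hm
      have hm' : m ≤ n := by omega
      have hmn : (m:ℝ) ≤ (n:ℝ) := by exact_mod_cast hm'
      have hy0 : (((2*n+1).choose m : ℕ) : ℝ) ≠ 0 := chooseR_ne _ _ (by omega)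
      have hm1 : ((m:ℝ)+1) ≠ 0 := by positivity
      have hx : (((n+1).choose (m+1) : ℕ) : ℝ)
          = (((n+1).choose m : ℕ) : ℝ) * ((n:ℝ)+1 - (m:ℝ)) / ((m:ℝ)+1) := by
        rw [eq_div_iff hm1]
        have h := castA (n+1) m (by omega)
        push_cast at h ⊢
        linarith [h]
      have hy : (((2*n+1).choose (m+1) : ℕ) : ℝ)
          = (((2*n+1).choose m : ℕ) : ℝ) * (2*(n:ℝ)+1 - (m:ℝ)) / ((m:ℝ)+1) := by
        rw [eq_div_iff hm1]
        have h := castA (2*n+1) m (by omega)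
        push_cast at h ⊢
        linarith [h]
      rw [Finset.sum_range_succ, ih (by omega), hx, hy]
      have hz : (2*(n:ℝ)+1 - (m:ℝ)) ≠ 0 := by linarith
      have hn1 : (n:ℝ) + 1 ≠ 0 := by positivity
      push_cast
      field_simp
      ring

/-- Gosper-style telescoping for `∑ (i+1)·C(n+1,i)/C(2n+1,i)`. -/
lemma gr (n : ℕ) : ∀ m, m ≤ n + 1 →
    ∑ i ∈ range m, ((i:ℝ)+1) * (((n+1).choose i : ℕ) : ℝ) / (((2*n+1).choose i : ℕ) : ℝ)
      = ((((m:ℝ)^2 - (2*(n:ℝ)^2+2*(n:ℝ)-1)*(m:ℝ)/((n:ℝ)+1) - (4*(n:ℝ)+6))/((n:ℝ)+2))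
          * (((n+1).choose m : ℕ) : ℝ) / (((2*n+1).choose m : ℕ) : ℝ))
        + (4*(n:ℝ)+6)/((n:ℝ)+2) := by
  intro m
  induction m with
  | zero =>
      intro _
      simp only [Finset.sum_range_zero, Nat.choose_zero_right, Nat.cast_one, Nat.cast_zero]
      have hn : (n:ℝ) + 1 ≠ 0 := by positivity
      have hn2 : (n:ℝ) + 2 ≠ 0 := by positivity
      field_simp
      ring
  | succ m ih =>
      intro hm
      have hm' : m ≤ n := by omega
      have hmn : (m:ℝ) ≤ (n:ℝ) := by exact_mod_cast hm'
      have hy0 : (((2*n+1).choose m : ℕ) : ℝ) ≠ 0 := chooseR_ne _ _ (by omega)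
      have hm1 : ((m:ℝ)+1) ≠ 0 := by positivity
      have hx : (((n+1).choose (m+1) : ℕ) : ℝ)
          = (((n+1).choose m : ℕ) : ℝ) * ((n:ℝ)+1 - (m:ℝ)) / ((m:ℝ)+1) := by
        rw [eq_div_iff hm1]
        have h := castA (n+1) m (by omega)
        push_cast at h ⊢
        linarith [h]
      have hy : (((2*n+1).choose (m+1) : ℕ) : ℝ)
          = (((2*n+1).choose m : ℕ) : ℝ) * (2*(n:ℝ)+1 - (m:ℝ)) / ((m:ℝ)+1) := by
        rw [eq_div_iff hm1]
        have h := castA (2*n+1) m (by omega)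
        push_cast at h ⊢
        linarith [h]
      rw [Finset.sum_range_succ, ih (by omega), hx, hy]
      have hz : (2*(n:ℝ)+1 - (m:ℝ)) ≠ 0 := by linarith
      have hn1 : (n:ℝ) + 1 ≠ 0 := by positivity
      have hn2 : (n:ℝ) + 2 ≠ 0 := by positivity
      push_cast
      field_simp
      ring


lemma rr_div (n k : ℕ) (h1 : 1 ≤ k) (h2 : k ≤ n) :
    rr n k / ((n:ℝ)+1-(k:ℝ)) = (((n+1).choose k : ℕ) : ℝ)
      / (((n:ℝ)+1) * (((2*n+1).choose k : ℕ) : ℝ)) := by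
  have hkn : (k:ℝ) ≤ (n:ℝ) := by exact_mod_cast h2
  have hd : (n:ℝ)+1-(k:ℝ) ≠ 0 := by linarith
  have hn1 : (n:ℝ)+1 ≠ 0 := by positivity
  have hu : (((2*n+1).choose k : ℕ) : ℝ) ≠ 0 := chooseR_ne _ _ (by omega)
  have hb := castB n k (by omega)
  unfold rr
  field_simp
  linear_combination hb

lemma perU (n k : ℕ) (h1 : 1 ≤ k) (h2 : k ≤ n) :
    rr (n+1) k / (k:ℝ) = rr n k / (k:ℝ)
      + ((k:ℝ) + 1) * (((n+1).choose k : ℕ) : ℝ) / (((2*n+1).choose k : ℕ) : ℝ)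
          * (1/((2*(n:ℝ)+2)*(2*(n:ℝ)+3))) := by
  have hkn : (k:ℝ) ≤ (n:ℝ) := by exact_mod_cast h2
  have hk1 : (1:ℝ) ≤ (k:ℝ) := by exact_mod_cast h1
  have hu : (((2*n+1).choose k : ℕ) : ℝ) ≠ 0 := chooseR_ne _ _ (by omega)
  have hn1 : (n:ℝ)+1 ≠ 0 := by positivity
  have hd1 : 2*(n:ℝ)+2-(k:ℝ) ≠ 0 := by linarith
  have hd2 : 2*(n:ℝ)+3-(k:ℝ) ≠ 0 := by linarith
  have hk0 : (k:ℝ) ≠ 0 := by linarith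
  have ea : ((n.choose k : ℕ) : ℝ)
      = (((n+1).choose k : ℕ) : ℝ) * ((n:ℝ)+1-(k:ℝ)) / ((n:ℝ)+1) := by
    rw [eq_div_iff hn1]
    linear_combination castB n k (by omega)
  have ev : (((2*n+2).choose k : ℕ) : ℝ)
      = (((2*n+1).choose k : ℕ) : ℝ) * (2*(n:ℝ)+2) / (2*(n:ℝ)+2-(k:ℝ)) := by
    rw [eq_div_iff hd1]
    have h := castB (2*n+1) k (by omega)
    rw [show (2*n+1)+1 = 2*n+2 from by ring] at h
    push_cast at h ⊢
    linarith [h]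
  have ew : (((2*n+3).choose k : ℕ) : ℝ)
      = (((2*n+2).choose k : ℕ) : ℝ) * (2*(n:ℝ)+3) / (2*(n:ℝ)+3-(k:ℝ)) := by
    rw [eq_div_iff hd2]
    have h := castB (2*n+2) k (by omega)
    rw [show (2*n+2)+1 = 2*n+3 from by ring] at h
    push_cast at h ⊢
    linarith [h]
  unfold rr
  rw [show 2*(n+1)+1 = 2*n+3 from by ring, ew, ev, ea]
  field_simp
  ring

lemma perB (n k : ℕ) (h1 : 1 ≤ k) (h2 : k ≤ n) :
    rr (n+1) k / (k:ℝ)^2 = rr n k / (k:ℝ)^2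
      + (rr n k / (k:ℝ) + ((n:ℝ)+2) * (rr n k / ((n:ℝ)+1-(k:ℝ))))
          * (1/((2*(n:ℝ)+2)*(2*(n:ℝ)+3))) := by
  have hkn : (k:ℝ) ≤ (n:ℝ) := by exact_mod_cast h2
  have hk1 : (1:ℝ) ≤ (k:ℝ) := by exact_mod_cast h1
  have hu : (((2*n+1).choose k : ℕ) : ℝ) ≠ 0 := chooseR_ne _ _ (by omega)
  have ha : ((n.choose k : ℕ) : ℝ) ≠ 0 := chooseR_ne _ _ h2
  have hn1 : (n:ℝ)+1 ≠ 0 := by positivity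
  have hd0 : (n:ℝ)+1-(k:ℝ) ≠ 0 := by linarith
  have hd1 : 2*(n:ℝ)+2-(k:ℝ) ≠ 0 := by linarith
  have hd2 : 2*(n:ℝ)+3-(k:ℝ) ≠ 0 := by linarith
  have hk0 : (k:ℝ) ≠ 0 := by linarith
  have eb : (((n+1).choose k : ℕ) : ℝ)
      = ((n.choose k : ℕ) : ℝ) * ((n:ℝ)+1) / ((n:ℝ)+1-(k:ℝ)) := by
    rw [eq_div_iff hd0]
    linear_combination (castB n k (by omega)).symm
  have ev : (((2*n+2).choose k : ℕ) : ℝ)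
      = (((2*n+1).choose k : ℕ) : ℝ) * (2*(n:ℝ)+2) / (2*(n:ℝ)+2-(k:ℝ)) := by
    rw [eq_div_iff hd1]
    have h := castB (2*n+1) k (by omega)
    rw [show (2*n+1)+1 = 2*n+2 from by ring] at h
    push_cast at h ⊢
    linarith [h]
  have ew : (((2*n+3).choose k : ℕ) : ℝ)
      = (((2*n+2).choose k : ℕ) : ℝ) * (2*(n:ℝ)+3) / (2*(n:ℝ)+3-(k:ℝ)) := by
    rw [eq_div_iff hd2]
    have h := castB (2*n+2) k (by omega)
    rw [show (2*n+2)+1 = 2*n+3 from by ring] at h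
    push_cast at h ⊢
    linarith [h]
  unfold rr
  rw [show 2*(n+1)+1 = 2*n+3 from by ring, ew, ev, eb]
  field_simp
  ring

lemma crel (n : ℕ) : (2*n+3).choose (n+1) * (n+2) = (2*n+3) * (2 * ((2*n+1).choose (n+1))) := by
  have h1 : (2*n+3).choose (n+1) = (2*n+3).choose (n+2) := by
    rw [← Nat.choose_symm (show n+2 ≤ 2*n+3 by omega)]
    congr 1
    omega
  have h2 : (2*n+3) * ((2*n+2).choose (n+1)) = (2*n+3).choose (n+2) * (n+2) := by
    have h := Nat.add_one_mul_choose_eq (2*n+2) (n+1)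
    simpa [Nat.succ_eq_add_one, show 2*n+2+1 = 2*n+3 from by ring] using h
  have h3 : (2*n+2).choose (n+1) = (2*n+1).choose n + (2*n+1).choose (n+1) := by
    have h := Nat.choose_succ_succ (2*n+1) n
    simpa [Nat.succ_eq_add_one, show 2*n+1+1 = 2*n+2 from by ring] using h
  have h4 : (2*n+1).choose n = (2*n+1).choose (n+1) := by
    rw [← Nat.choose_symm (show n+1 ≤ 2*n+1 by omega)]
    congr 1
    omega
  calc (2*n+3).choose (n+1) * (n+2) = (2*n+3).choose (n+2) * (n+2) := by rw [h1]
    _ = (2*n+3) * ((2*n+2).choose (n+1)) := h2.symm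
    _ = (2*n+3) * (2 * ((2*n+1).choose (n+1))) := by rw [h3, h4]; ring


lemma Hstep (n : ℕ) : H (2*(n+1)+1) = H (2*n+1) + 1/(2*(n:ℝ)+2) + 1/(2*(n:ℝ)+3) := by
  rw [show 2*(n+1)+1 = (2*n+1)+1+1 from by ring]
  unfold H
  rw [Finset.sum_range_succ, Finset.sum_range_succ]
  push_cast
  ring

lemma Hstep1 (n : ℕ) : H (n+1) = H n + 1/((n:ℝ)+1) := by
  unfold H
  rw [Finset.sum_range_succ]

lemma H2step (n : ℕ) : H2 (2*(n+1)+1) = H2 (2*n+1) + 1/(2*(n:ℝ)+2)^2 + 1/(2*(n:ℝ)+3)^2 := by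
  rw [show 2*(n+1)+1 = (2*n+1)+1+1 from by ring]
  unfold H2
  rw [Finset.sum_range_succ, Finset.sum_range_succ]
  push_cast
  ring

lemma Ulem (n : ℕ) : ∑ i ∈ range n, rr n (i+1) / ((i:ℝ)+1)
    = H (2*n+1) - H n - 1/((n:ℝ)+1) := by
  induction n with
  | zero => simp [H]
  | succ n ih =>
    have hc : (((2*n+1).choose (n+1) : ℕ) : ℝ) ≠ 0 := chooseR_ne _ _ (by omega)
    have hw : (((2*n+3).choose (n+1) : ℕ) : ℝ) * ((n:ℝ)+2)
        = (2*(n:ℝ)+3) * (2 * (((2*n+1).choose (n+1) : ℕ) : ℝ)) := by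
      exact_mod_cast crel n
    have hwne : (((2*n+3).choose (n+1) : ℕ) : ℝ) ≠ 0 := chooseR_ne _ _ (by omega)
    rw [Finset.sum_range_succ]
    have hsplit : ∀ i ∈ range n, rr (n+1) (i+1) / (((i:ℕ):ℝ)+1)
        = rr n (i+1) / ((i:ℝ)+1)
          + (((i:ℝ) + 1 + 1) * (((n+1).choose (i+1) : ℕ) : ℝ) / (((2*n+1).choose (i+1) : ℕ) : ℝ))
            * (1/((2*(n:ℝ)+2)*(2*(n:ℝ)+3))) := by
      intro i hi
      have hi' : i + 1 ≤ n := mem_range.mp hi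
      have h := perU n (i+1) (by omega) hi'
      push_cast at h ⊢
      linear_combination h
    rw [Finset.sum_congr rfl hsplit, Finset.sum_add_distrib, ih, ← Finset.sum_mul]
    have h0 := gr n (n+1) le_rfl
    rw [Finset.sum_range_succ'] at h0
    simp only [Nat.choose_zero_right, Nat.choose_self, Nat.cast_one, Nat.cast_zero,
      Nat.cast_add, zero_add, one_mul, mul_one, div_one] at h0
    push_cast at h0
    have hsum : ∑ i ∈ range n,
        (((i:ℝ) + 1 + 1) * (((n+1).choose (i+1) : ℕ) : ℝ) / (((2*n+1).choose (i+1) : ℕ) : ℝ))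
        = ((((n:ℝ)+1)^2 - (2*(n:ℝ)^2+2*(n:ℝ)-1)*((n:ℝ)+1)/((n:ℝ)+1) - (4*(n:ℝ)+6))/((n:ℝ)+2))
            / (((2*n+1).choose (n+1) : ℕ) : ℝ)
          + (4*(n:ℝ)+6)/((n:ℝ)+2) - 1 := by
      linarith [h0]
    rw [hsum]
    have hrlast : rr (n+1) (n+1) = 1/(((2*n+3).choose (n+1) : ℕ) : ℝ) := by
      unfold rr
      rw [show 2*(n+1)+1 = 2*n+3 from by ring]
      simp [Nat.choose_self]
    rw [hrlast, Hstep n, Hstep1 n]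
    have hwv : (((2*n+3).choose (n+1) : ℕ) : ℝ)
        = (2*(n:ℝ)+3) * (2 * (((2*n+1).choose (n+1) : ℕ) : ℝ)) / ((n:ℝ)+2) := by
      rw [eq_div_iff (by positivity)]
      linarith [hw]
    rw [hwv]
    have hn1 : (n:ℝ)+1 ≠ 0 := by positivity
    have hn2 : (n:ℝ)+2 ≠ 0 := by positivity
    have h23 : 2*(n:ℝ)+3 ≠ 0 := by positivity
    have h22 : 2*(n:ℝ)+2 ≠ 0 := by positivity
    push_cast
    field_simp
    ring


lemma Qxlem (n : ℕ) : ∑ i ∈ range n, rr n (i+1) / ((n:ℝ) - (i:ℝ))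
    = (1 - 1/(((2*n+1).choose (n+1) : ℕ) : ℝ)) / ((n:ℝ)+1) := by
  have hc : (((2*n+1).choose (n+1) : ℕ) : ℝ) ≠ 0 := chooseR_ne _ _ (by omega)
  have hn1 : (n:ℝ)+1 ≠ 0 := by positivity
  have hsplit : ∀ i ∈ range n, rr n (i+1) / ((n:ℝ) - (i:ℝ))
      = ((((n+1).choose (i+1) : ℕ) : ℝ) / (((2*n+1).choose (i+1) : ℕ) : ℝ)) * (1/((n:ℝ)+1)) := by
    intro i hi
    have h := rr_div n (i+1) (by omega) (mem_range.mp hi)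
    push_cast at h
    rw [show (n:ℝ) - (i:ℝ) = (n:ℝ)+1-((i:ℝ)+1) from by ring, h]
    have hu : (((2*n+1).choose (i+1) : ℕ) : ℝ) ≠ 0 :=
      chooseR_ne _ _ (by have := mem_range.mp hi; omega)
    field_simp
  rw [Finset.sum_congr rfl hsplit, ← Finset.sum_mul]
  have h0 := gq n (n+1) le_rfl
  rw [Finset.sum_range_succ'] at h0
  simp only [Nat.choose_zero_right, Nat.choose_self, Nat.cast_one, Nat.cast_zero,
    Nat.cast_add, zero_add, one_mul, mul_one, div_one] at h0
  have hsum : ∑ i ∈ range n,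
      ((((n+1).choose (i+1) : ℕ) : ℝ) / (((2*n+1).choose (i+1) : ℕ) : ℝ))
      = (((n:ℝ)+1 - (2*(n:ℝ)+2))/((n:ℝ)+1)) / (((2*n+1).choose (n+1) : ℕ) : ℝ) + 2 - 1 := by
    linarith [h0]
  rw [hsum]
  field_simp
  ring

lemma Blem (n : ℕ) : ∑ i ∈ range n, rr n (i+1) / ((i:ℝ)+1)^2
    = 1/2 * (H2 (2*n+1) - (H (2*n+1) - H n)^2) := by
  induction n with
  | zero => simp [H, H2]
  | succ n ih =>
    have hc : (((2*n+1).choose (n+1) : ℕ) : ℝ) ≠ 0 := chooseR_ne _ _ (by omega)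
    have hw : (((2*n+3).choose (n+1) : ℕ) : ℝ) * ((n:ℝ)+2)
        = (2*(n:ℝ)+3) * (2 * (((2*n+1).choose (n+1) : ℕ) : ℝ)) := by
      exact_mod_cast crel n
    rw [Finset.sum_range_succ]
    have hsplit : ∀ i ∈ range n, rr (n+1) (i+1) / (((i:ℕ):ℝ)+1)^2
        = rr n (i+1) / ((i:ℝ)+1)^2
          + (rr n (i+1) / ((i:ℝ)+1) + ((n:ℝ)+2) * (rr n (i+1) / ((n:ℝ) - (i:ℝ))))
            * (1/((2*(n:ℝ)+2)*(2*(n:ℝ)+3))) := by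
      intro i hi
      have hi' : i + 1 ≤ n := mem_range.mp hi
      have h := perB n (i+1) (by omega) hi'
      push_cast at h ⊢
      rw [show (n:ℝ) - (i:ℝ) = (n:ℝ)+1-((i:ℝ)+1) from by ring]
      linear_combination h
    rw [Finset.sum_congr rfl hsplit, Finset.sum_add_distrib, ih, ← Finset.sum_mul,
      Finset.sum_add_distrib, ← Finset.mul_sum, Ulem n, Qxlem n]
    have hrlast : rr (n+1) (n+1) = 1/(((2*n+3).choose (n+1) : ℕ) : ℝ) := by
      unfold rr
      rw [show 2*(n+1)+1 = 2*n+3 from by ring]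
      simp [Nat.choose_self]
    rw [hrlast, Hstep n, Hstep1 n, H2step n]
    have hwv : (((2*n+3).choose (n+1) : ℕ) : ℝ)
        = (2*(n:ℝ)+3) * (2 * (((2*n+1).choose (n+1) : ℕ) : ℝ)) / ((n:ℝ)+2) := by
      rw [eq_div_iff (by positivity)]
      linarith [hw]
    rw [hwv]
    have hn1 : (n:ℝ)+1 ≠ 0 := by positivity
    have hn2 : (n:ℝ)+2 ≠ 0 := by positivity
    have h23 : 2*(n:ℝ)+3 ≠ 0 := by positivity
    have h22 : 2*(n:ℝ)+2 ≠ 0 := by positivity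
    push_cast
    field_simp
    ring


lemma swapSum (N : ℕ) (a b : ℕ → ℝ) :
    ∑ k ∈ range N, a k * ∑ j ∈ range k, b j
      = ∑ j ∈ range N, b j * ∑ k ∈ Ico (j+1) N, a k := by
  induction N with
  | zero => simp
  | succ N ih =>
    rw [Finset.sum_range_succ, ih, Finset.sum_range_succ]
    have h1 : ∑ k ∈ Ico (N+1) (N+1), a k = 0 := by simp
    rw [h1, mul_zero, add_zero]
    have h2 : ∀ j ∈ range N, b j * ∑ k ∈ Ico (j+1) (N+1), a k
        = b j * ∑ k ∈ Ico (j+1) N, a k + b j * a N := by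
      intro j hj
      rw [Finset.sum_Ico_succ_top (mem_range.mp hj), mul_add]
    rw [Finset.sum_congr rfl h2, Finset.sum_add_distrib, ← Finset.sum_mul]
    ring

lemma hock (n : ℕ) : ∀ d, d ≤ n →
    ∑ k ∈ Ico (n-d) (n+1), ((2*n-k).choose n) = (n+1+d).choose (n+1) := by
  intro d
  induction d with
  | zero =>
    intro _
    simp [Nat.Ico_succ_singleton, show 2*n-n = n from by omega]
  | succ d ih =>
    intro hd
    have hlt : n - (d+1) < n + 1 := by omega
    rw [Finset.sum_eq_sum_Ico_succ_bot hlt, show n-(d+1)+1 = n-d from by omega, ih (by omega),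
      show 2*n - (n-(d+1)) = n+d+1 from by omega]
    have hps := (Nat.choose_succ_succ (n+d+1) n).symm
    rw [show n+1+(d+1) = (n+d+1)+1 from by ring, show n+1+d = n+d+1 from by ring]
    simpa [Nat.succ_eq_add_one] using hps

lemma bridgeN (n k : ℕ) (h1 : 1 ≤ k) (h : k ≤ n) :
    (2*n+1).choose (n+1) * (n.choose k) = (2*n+1).choose k * ((2*n+1-k).choose (n+1)) := by
  have hm := Nat.choose_mul (n := 2*n+1) h
  have h2 : (2*n+1).choose (n+1) = (2*n+1).choose n := by
    rw [← Nat.choose_symm (show n ≤ 2*n+1 by omega)]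
    congr 1
    omega
  have h3 : (2*n+1-k).choose (n-k) = (2*n+1-k).choose (n+1) := by
    rw [← Nat.choose_symm (show n+1 ≤ 2*n+1-k by omega)]
    congr 1
    omega
  rw [h2, hm, h3]

theorem stmt2 (n : ℕ) :
    ∑ k ∈ Finset.range (n+1), (((2*n-k).choose n : ℕ) : ℝ) * H2 k
      = (1/2) * (((2*n+1).choose n : ℕ) : ℝ) * (H2 (2*n+1) - (H (2*n+1) - H n)^2) := by
  have hswap : ∑ k ∈ range (n+1), (((2*n-k).choose n : ℕ) : ℝ) * ∑ j ∈ range k, (1:ℝ)/((j:ℝ)+1)^2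
      = ∑ j ∈ range (n+1), ((1:ℝ)/((j:ℝ)+1)^2) * ∑ k ∈ Ico (j+1) (n+1), (((2*n-k).choose n : ℕ) : ℝ) :=
    swapSum (n+1) _ _
  conv_lhs => simp only [H2]
  rw [hswap, Finset.sum_range_succ]
  have hempty : ∑ k ∈ Ico (n+1) (n+1), (((2*n-k).choose n : ℕ) : ℝ) = 0 := by simp
  rw [hempty, mul_zero, add_zero]
  have hinner : ∀ j ∈ range n, ((1:ℝ)/((j:ℝ)+1)^2) * ∑ k ∈ Ico (j+1) (n+1), (((2*n-k).choose n : ℕ) : ℝ)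
      = (((2*n+1).choose (n+1) : ℕ) : ℝ) * (rr n (j+1) / ((j:ℝ)+1)^2) := by
    intro j hj
    have hjn : j < n := mem_range.mp hj
    have hcast : ∑ k ∈ Ico (j+1) (n+1), (((2*n-k).choose n : ℕ) : ℝ)
        = ((∑ k ∈ Ico (j+1) (n+1), ((2*n-k).choose n) : ℕ) : ℝ) := by
      push_cast
      rfl
    have hh := hock n (n-1-j) (by omega)
    rw [show n-(n-1-j) = j+1 from by omega, show n+1+(n-1-j) = 2*n-j from by omega] at hh
    rw [hcast, hh]
    have hb := bridgeN n (j+1) (by omega) (by omega)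
    rw [show 2*n+1-(j+1) = 2*n-j from by omega] at hb
    have hbR : (((2*n+1).choose (n+1) : ℕ) : ℝ) * ((n.choose (j+1) : ℕ) : ℝ)
        = (((2*n+1).choose (j+1) : ℕ) : ℝ) * (((2*n-j).choose (n+1) : ℕ) : ℝ) := by
      exact_mod_cast hb
    have hu : (((2*n+1).choose (j+1) : ℕ) : ℝ) ≠ 0 := chooseR_ne _ _ (by omega)
    have hj1 : ((j:ℝ)+1)^2 ≠ 0 := by positivity
    unfold rr
    field_simp
    linear_combination (-1:ℝ) * hbR
  rw [Finset.sum_congr rfl hinner, ← Finset.mul_sum, Blem n]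
  have hsymm : ((2*n+1).choose (n+1) : ℕ) = (2*n+1).choose n := by
    rw [← Nat.choose_symm (show n ≤ 2*n+1 by omega)]
    congr 1
    omega
  rw [hsymm]
  ring
end

section
/- For every nonnegative integer n, ∑_{k=0}^{n} C(2n-k, n) · H_k^2 = (1/2) · C(2n+1, n) · ( 2H_{n+1}^{(2)} - H_{2n+1}^{(2)} + 2H_{n+1}^2 - H_n^2 + H_{2n+1}(H_{2n+1} - 4H_{n+1} + 2H_n) ), where H_j and H_j^{(2)} are first- and second-order harmonic numbers. -/
open Finset

lemma H2_succ (n : ℕ) : H2 (n+1) = H2 n + 1/((n:ℝ)+1)^2 := by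
  simp [H2, Finset.sum_range_succ]

lemma H2_zero : H2 0 = 0 := by simp [H2]
lemma H_one : H 1 = 1 := by simp [H]

-- hockey stick
lemma hock_s3 (s M : ℕ) : ∑ k ∈ range M, (s+k).choose s = (s+M).choose (s+1) := by
  induction M with
  | zero => simp [Nat.choose_eq_zero_of_lt]
  | succ M ih =>
    rw [Finset.sum_range_succ, ih]
    rw [show s + (M+1) = (s+M) + 1 by ring, Nat.choose_succ_succ (s+M) s,
      Nat.succ_eq_add_one]
    omega

-- reversed hockey stick
lemma rhock (s M : ℕ) : ∑ i ∈ range M, (s + M - 1 - i).choose s = (s+M).choose (s+1) := by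
  rw [← hock_s3 s M, ← Finset.sum_range_reflect]
  apply Finset.sum_congr rfl
  intro i hi
  simp only [Finset.mem_range] at hi
  congr 1
  omega

-- instance A
lemma hockA (n : ℕ) : ∑ i ∈ range (n+1), (2*n-i).choose (n+1) = (2*n+1).choose (n+2) := by
  rw [Finset.sum_range_succ]
  rw [show (2*n-n).choose (n+1) = 0 by
    apply Nat.choose_eq_zero_of_lt; omega]
  rw [add_zero]
  have h2 : ∑ i ∈ range n, (2*n-i).choose (n+1)
      = ∑ i ∈ range n, ((n+1) + n - 1 - i).choose (n+1) := by
    apply Finset.sum_congr rfl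
    intro i hi
    simp only [Finset.mem_range] at hi
    congr 1
    omega
  rw [h2, rhock (n+1) n, show (n+1) + n = 2*n+1 by ring, show (n+1)+1 = n+2 by ring]

-- instance B
lemma hockB (n i : ℕ) (h : i < n) :
    ∑ k ∈ Ico (i+1) (n+1), (2*n-k).choose n = (2*n-i).choose (n+1) := by
  rw [Finset.sum_Ico_eq_sum_range]
  rw [show n+1 - (i+1) = n - i by omega]
  have h2 : ∑ t ∈ range (n-i), (2*n-(i+1+t)).choose n
      = ∑ t ∈ range (n-i), (n + (n-i) - 1 - t).choose n := by
    apply Finset.sum_congr rfl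
    intro t ht
    simp only [Finset.mem_range] at ht
    congr 1
    omega
  rw [h2, rhock n (n-i), show n + (n-i) = 2*n-i by omega]

-- double sum exchange
lemma helper (N : ℕ) (g : ℕ → ℕ → ℝ) :
    ∑ k ∈ range N, ∑ j ∈ range k, g k j = ∑ j ∈ range N, ∑ k ∈ Ico (j+1) N, g k j := by
  induction N with
  | zero => simp
  | succ N ih =>
    rw [Finset.sum_range_succ, ih, Finset.sum_range_succ]
    rw [show Ico (N+1) (N+1) = ∅ by simp, Finset.sum_empty, add_zero]
    rw [← Finset.sum_add_distrib]
    apply Finset.sum_congr rfl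
    intro j hj
    simp only [Finset.mem_range] at hj
    rw [Finset.sum_Ico_succ_top (by omega)]

-- the swap lemma
lemma swap (n : ℕ) (w : ℕ → ℝ) :
    ∑ k ∈ range (n+1), ((2*n-k).choose n : ℝ) * (∑ j ∈ range k, w j)
      = ∑ j ∈ range n, ((2*n-j).choose (n+1) : ℝ) * w j := by
  have h1 : ∀ k, ((2*n-k).choose n : ℝ) * (∑ j ∈ range k, w j)
      = ∑ j ∈ range k, ((2*n-k).choose n : ℝ) * w j := fun k => Finset.mul_sum _ _ _
  simp only [h1]
  rw [helper (n+1) (fun k j => ((2*n-k).choose n : ℝ) * w j)]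
  rw [Finset.sum_range_succ]
  rw [show Ico (n+1) (n+1) = ∅ by simp, Finset.sum_empty, add_zero]
  apply Finset.sum_congr rfl
  intro j hj
  simp only [Finset.mem_range] at hj
  rw [← Finset.sum_mul]
  congr 1
  rw [← hockB n j hj]
  push_cast
  rfl








-- f-lemma
lemma L1 : ∀ N s : ℕ, ∑ k ∈ range (N+1), ((N-k).choose s : ℝ)/((k:ℝ)+1)
    = (((N+1).choose s : ℕ) : ℝ) * (H (N+1) - H s) := by
  intro N
  induction N with
  | zero =>
    intro s
    match s with
    | 0 => simp [H_one, H_zero]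
    | 1 => simp [H_one]
    | (s+2) =>
      rw [Finset.sum_range_one, show Nat.choose (0-0) (s+2) = 0 from
        Nat.choose_eq_zero_of_lt (by omega), show Nat.choose (0+1) (s+2) = 0 from
        Nat.choose_eq_zero_of_lt (by omega)]
      simp
  | succ N ih =>
    intro s
    match s with
    | 0 =>
      simp only [Nat.choose_zero_right, Nat.cast_one, one_mul, H_zero, sub_zero]
      rw [H]
    | (s+1) =>
      rw [Finset.sum_range_succ]
      rw [show (N+1-(N+1)).choose (s+1) = 0 by simp [Nat.choose_eq_zero_of_lt]]
      have hsplit : ∀ k ∈ range (N+1), ((N+1-k).choose (s+1) : ℝ)/((k:ℝ)+1)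
          = ((N-k).choose s : ℝ)/((k:ℝ)+1) + ((N-k).choose (s+1) : ℝ)/((k:ℝ)+1) := by
        intro k hk
        simp only [Finset.mem_range] at hk
        rw [show N+1-k = (N-k)+1 by omega, Nat.choose_succ_succ ((N-k)) s]
        push_cast
        ring
      rw [Finset.sum_congr rfl hsplit, Finset.sum_add_distrib, ih s, ih (s+1)]
      have habs : ((N:ℝ)+2) * ((N+1).choose s : ℕ) = (((N+2).choose (s+1) : ℕ):ℝ) * ((s:ℝ)+1) := by
        have := Nat.add_one_mul_choose_eq (N+1) s
        have h2 : (N+1+1) * (N+1).choose s = (N+2).choose (s+1) * (s+1) := by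
          simpa [Nat.succ_eq_add_one] using this
        exact_mod_cast h2
      have hpas : (((N+2).choose (s+1) : ℕ):ℝ) = ((N+1).choose s : ℕ) + (((N+1).choose (s+1):ℕ):ℝ) := by
        rw [show N+2 = (N+1)+1 by ring, Nat.choose_succ_succ (N+1) s]
        push_cast; ring
      rw [show N+1+1 = N+2 by ring, H_succ (N+1), H_succ s]
      rw [hpas]
      have h1 : ((N:ℝ)+1+1) ≠ 0 := by positivity
      have h2 : ((s:ℝ)+1) ≠ 0 := by positivity
      rw [hpas] at habs
      field_simp
      push_cast
      linear_combination habs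


-- ℕ-level absorption identities
lemma N1 (n i : ℕ) (_ : i < n) :
    (2*n+1-i) * ((2*n-i).choose (n+1)) = ((2*n+1-i).choose (n+2)) * (n+2) := by
  have h2 := Nat.add_one_mul_choose_eq (2*n-i) (n+1)
  rw [show 2*n-i+1 = 2*n+1-i by omega] at h2
  rw [show n+1+1 = n+2 from rfl] at h2
  exact h2

lemma N2 (n i : ℕ) (h : i < n) :
    ((2*n+1-i).choose (n+2)) * (2*n+2-i) = ((2*n+2-i).choose (n+2)) * (n-i) := by
  have h2 := Nat.choose_mul_succ_eq (2*n+1-i) (n+2)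
  rw [show 2*n+1-i+1 = 2*n+2-i by omega] at h2
  rw [show 2*n+2-i-(n+2) = n-i by omega] at h2
  exact h2

lemma N3 (n i : ℕ) (h : i < n) :
    ((2*n-i-1).choose (n+1)) * (2*n-i) = ((2*n-i).choose (n+1)) * (n-(i+1)) := by
  have h2 := Nat.choose_mul_succ_eq (2*n-i-1) (n+1)
  rw [show 2*n-i-1+1 = 2*n-i by omega] at h2
  rw [show 2*n-i-(n+1) = n-(i+1) by omega] at h2
  exact h2

-- real versions
lemma E1 (n i : ℕ) (h : i < n) :
    (2*(n:ℝ)+1-i) * ((2*n-i).choose (n+1) : ℝ) = ((2*n+1-i).choose (n+2) : ℝ) * ((n:ℝ)+2) := by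
  have h2 := congrArg (Nat.cast (R := ℝ)) (N1 n i h)
  push_cast [Nat.cast_sub (by omega : i ≤ 2*n+1)] at h2
  linear_combination h2

lemma E2 (n i : ℕ) (h : i < n) :
    ((2*n+1-i).choose (n+2) : ℝ) * (2*(n:ℝ)+2-i) = ((2*n+2-i).choose (n+2) : ℝ) * ((n:ℝ)-i) := by
  have h2 := congrArg (Nat.cast (R := ℝ)) (N2 n i h)
  push_cast [Nat.cast_sub (by omega : i ≤ 2*n+2), Nat.cast_sub (by omega : i ≤ n)] at h2
  linear_combination h2

lemma E3 (n i : ℕ) (h : i < n) :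
    ((2*n-i-1).choose (n+1) : ℝ) * (2*(n:ℝ)-i) = ((2*n-i).choose (n+1) : ℝ) * ((n:ℝ)-i-1) := by
  have h2 := congrArg (Nat.cast (R := ℝ)) (N3 n i h)
  push_cast [Nat.cast_sub (by omega : i ≤ 2*n), Nat.cast_sub (by omega : i+1 ≤ n)] at h2
  linear_combination h2

noncomputable def Ufun (n : ℕ) : ℕ → ℝ :=
  fun i => -((2*n+1-i : ℕ):ℝ) * (((2*n-i).choose (n+1) : ℕ):ℝ)/(((n:ℝ)+1)*((n:ℝ)+2)^2)

lemma certL2 (n i : ℕ) (h : i ≤ n) :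
    ((2*n+2-i).choose (n+2) : ℝ)/((i:ℝ)+1)^2
      = (2*(n:ℝ)+2)*(2*(n:ℝ)+3)*((2*n-i).choose (n+1) : ℝ)/(((n:ℝ)+1)*((n:ℝ)+2)*((i:ℝ)+1)^2)
        - (4*(n:ℝ)+5)*((2*n-i).choose (n+1) : ℝ)/(((n:ℝ)+1)*((n:ℝ)+2)*((i:ℝ)+1))
        + ((2*n+2-i).choose (n+2) : ℝ)/(((n:ℝ)+1)*((i:ℝ)+1))
        + (Ufun n (i+1) - Ufun n i) := by
  rcases eq_or_lt_of_le h with rfl | hlt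
  · -- i = n
    simp only [Ufun]
    rw [show 2*i+2-i = i+2 by omega, show 2*i-i = i by omega,
        show 2*i+1-(i+1) = i by omega, show 2*i-(i+1) = i-1 by omega,
        show 2*i+1-i = i+1 by omega]
    rw [Nat.choose_self, show (i:ℕ).choose (i+1) = 0 from Nat.choose_eq_zero_of_lt (by omega),
        show ((i:ℕ)-1).choose (i+1) = 0 from Nat.choose_eq_zero_of_lt (by omega)]
    push_cast
    have h1 : ((i:ℝ)+1) ≠ 0 := by positivity
    field_simp
    ring
  · -- i < n
    have hnz1 : ((n:ℝ)-i) ≠ 0 := by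
      have : (i:ℝ) < n := by exact_mod_cast hlt
      linarith
    have hnz2 : (2*(n:ℝ)-i) ≠ 0 := by
      have : (i:ℝ) < n := by exact_mod_cast hlt
      have hn0 : (0:ℝ) ≤ n := Nat.cast_nonneg n
      linarith
    have e1 := E1 n i hlt
    have e2 := E2 n i hlt
    have e3 := E3 n i hlt
    have hb : ((2*n+2-i).choose (n+2) : ℝ)
        = (2*(n:ℝ)+2-i)*(2*(n:ℝ)+1-i)*((2*n-i).choose (n+1) : ℝ)/(((n:ℝ)+2)*((n:ℝ)-i)) := by
      rw [eq_div_iff (mul_ne_zero (by positivity) hnz1)]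
      linear_combination (-((n:ℝ)+2))*e2 - (2*(n:ℝ)+2-(i:ℝ))*e1
    have hc : ((2*n-i-1).choose (n+1) : ℝ)
        = ((n:ℝ)-i-1)*((2*n-i).choose (n+1) : ℝ)/(2*(n:ℝ)-i) := by
      rw [eq_div_iff hnz2]
      linear_combination e3
    simp only [Ufun]
    rw [show 2*n+1-(i+1) = 2*n-i by omega, show 2*n-(i+1) = 2*n-i-1 by omega]
    rw [Nat.cast_sub (by omega : i ≤ 2*n), Nat.cast_sub (by omega : i ≤ 2*n+1)]
    rw [hb, hc]
    have d1 : ((i:ℝ)+1) ≠ 0 := by positivity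
    have d2 : ((n:ℝ)+1) ≠ 0 := by positivity
    have d3 : ((n:ℝ)+2) ≠ 0 := by positivity
    push_cast
    field_simp
    ring


-- restricted f-lemma instances
lemma L1a (n : ℕ) : ∑ i ∈ range (n+1), ((2*n-i).choose (n+1) : ℝ)/((i:ℝ)+1)
    = (((2*n+1).choose (n+1) : ℕ):ℝ) * (H (2*n+1) - H (n+1)) := by
  have h0 := L1 (2*n) (n+1)
  rw [show 2*n+1 = 2*n+1 from rfl] at h0
  rw [← h0]
  apply Finset.sum_subset
  · intro x hx
    simp only [Finset.mem_range] at hx ⊢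
    omega
  · intro x hx hnx
    simp only [Finset.mem_range] at hx hnx
    rw [show (2*n-x).choose (n+1) = 0 from Nat.choose_eq_zero_of_lt (by omega)]
    simp

lemma L1b (n : ℕ) : ∑ i ∈ range (n+1), ((2*n+2-i).choose (n+2) : ℝ)/((i:ℝ)+1)
    = (((2*n+3).choose (n+2) : ℕ):ℝ) * (H (2*n+3) - H (n+2)) := by
  have h0 := L1 (2*n+2) (n+2)
  rw [show 2*n+2+1 = 2*n+3 from rfl] at h0
  rw [← h0]
  apply Finset.sum_subset
  · intro x hx
    simp only [Finset.mem_range] at hx ⊢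
    omega
  · intro x hx hnx
    simp only [Finset.mem_range] at hx hnx
    rw [show (2*n+2-x).choose (n+2) = 0 from Nat.choose_eq_zero_of_lt (by omega)]
    simp

lemma cB (n : ℕ) : ((2*n).choose (n+1) : ℝ) * (2*(n:ℝ)+1) = (((2*n+1).choose (n+1)):ℝ) * (n:ℝ) := by
  have h2 := congrArg (Nat.cast (R := ℝ)) (Nat.choose_mul_succ_eq (2*n) (n+1))
  rw [show 2*n+1-(n+1) = n by omega] at h2
  push_cast at h2
  linear_combination h2

lemma hsymm (n : ℕ) : (2*n+1).choose n = (2*n+1).choose (n+1) := by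
  have h2 := Nat.choose_symm (show n+1 ≤ 2*n+1 by omega)
  rw [show 2*n+1-(n+1) = n by omega] at h2
  exact h2

lemma cC (n : ℕ) : (((2*n+3).choose (n+2)):ℝ) * (((n:ℝ)+1)*((n:ℝ)+2))
    = (((2*n+1).choose (n+1)):ℝ) * ((2*(n:ℝ)+2)*(2*(n:ℝ)+3)) := by
  have e1 := congrArg (Nat.cast (R := ℝ)) (Nat.add_one_mul_choose_eq (2*n+2) (n+1))
  have e2 := congrArg (Nat.cast (R := ℝ)) (Nat.add_one_mul_choose_eq (2*n+1) n)
  have e3 := congrArg (Nat.cast (R := ℝ)) (hsymm n)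
  push_cast at e1 e2 e3
  rw [show 2*n+2+1 = 2*n+3 from rfl] at e1
  rw [show 2*n+1+1 = 2*n+2 from rfl] at e2
  linear_combination (-((n:ℝ)+1))*e1 - (2*(n:ℝ)+3)*e2 + (2*(n:ℝ)+2)*(2*(n:ℝ)+3)*e3

lemma L2 : ∀ n : ℕ, ∑ i ∈ range (n+1), ((2*n-i).choose (n+1) : ℝ)/((i:ℝ)+1)^2
    = (((2*n+1).choose (n+1) : ℕ):ℝ)/2 * (H2 (2*n+1) - (H (2*n+1) - H n)^2) := by
  intro n
  induction n with
  | zero =>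
    rw [Finset.sum_range_one]
    norm_num [H_zero, H_one, H2_succ, H2_zero, H]
  | succ n ih =>
    simp only [show 2*(n+1) = 2*n+2 from by ring, show n+1+1 = n+2 from rfl,
      show 2*n+2+1 = 2*n+3 from rfl]
    rw [Finset.sum_range_succ]
    rw [show (2*n+2-(n+1)).choose (n+2) = 0 from Nat.choose_eq_zero_of_lt (by omega)]
    rw [Finset.sum_congr rfl (fun i hi => certL2 n i (by
      simp only [Finset.mem_range] at hi; omega))]
    rw [Finset.sum_add_distrib, Finset.sum_add_distrib, Finset.sum_sub_distrib,
        Finset.sum_range_sub (Ufun n)]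
    have hS1 : ∑ i ∈ range (n+1),
        (2*(n:ℝ)+2)*(2*(n:ℝ)+3)*((2*n-i).choose (n+1) : ℝ)/(((n:ℝ)+1)*((n:ℝ)+2)*((i:ℝ)+1)^2)
        = ((2*(n:ℝ)+2)*(2*(n:ℝ)+3)/(((n:ℝ)+1)*((n:ℝ)+2)))
          * ∑ i ∈ range (n+1), ((2*n-i).choose (n+1) : ℝ)/((i:ℝ)+1)^2 := by
      rw [Finset.mul_sum]
      apply Finset.sum_congr rfl
      intro i _
      have h1 : ((i:ℝ)+1) ≠ 0 := by positivity
      have h2 : ((n:ℝ)+1) ≠ 0 := by positivity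
      have h3 : ((n:ℝ)+2) ≠ 0 := by positivity
      field_simp
    have hS2 : ∑ i ∈ range (n+1),
        (4*(n:ℝ)+5)*((2*n-i).choose (n+1) : ℝ)/(((n:ℝ)+1)*((n:ℝ)+2)*((i:ℝ)+1))
        = ((4*(n:ℝ)+5)/(((n:ℝ)+1)*((n:ℝ)+2)))
          * ∑ i ∈ range (n+1), ((2*n-i).choose (n+1) : ℝ)/((i:ℝ)+1) := by
      rw [Finset.mul_sum]
      apply Finset.sum_congr rfl
      intro i _
      have h1 : ((i:ℝ)+1) ≠ 0 := by positivity
      have h2 : ((n:ℝ)+1) ≠ 0 := by positivity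
      have h3 : ((n:ℝ)+2) ≠ 0 := by positivity
      field_simp
    have hS3 : ∑ i ∈ range (n+1),
        ((2*n+2-i).choose (n+2) : ℝ)/(((n:ℝ)+1)*((i:ℝ)+1))
        = (1/((n:ℝ)+1)) * ∑ i ∈ range (n+1), ((2*n+2-i).choose (n+2) : ℝ)/((i:ℝ)+1) := by
      rw [Finset.mul_sum]
      apply Finset.sum_congr rfl
      intro i _
      have h1 : ((i:ℝ)+1) ≠ 0 := by positivity
      have h2 : ((n:ℝ)+1) ≠ 0 := by positivity
      field_simp
    rw [hS1, hS2, hS3, ih, L1a n, L1b n]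
    have hU1 : Ufun n (n+1) = 0 := by
      simp only [Ufun, show 2*n-(n+1) = n-1 by omega]
      rw [show (n-1).choose (n+1) = 0 from Nat.choose_eq_zero_of_lt (by omega)]
      simp
    have hU0 : Ufun n 0 = -((2*(n:ℝ)+1) * ((2*n).choose (n+1) : ℝ))/(((n:ℝ)+1)*((n:ℝ)+2)^2) := by
      simp only [Ufun, Nat.sub_zero]
      push_cast
      ring
    rw [hU1, hU0]
    have hB0 : (0:ℝ) < (((2*n+1).choose (n+1) : ℕ):ℝ) := by
      have : 0 < (2*n+1).choose (n+1) := Nat.choose_pos (by omega)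
      exact_mod_cast this
    have hC23 : (((2*n+3).choose (n+2)):ℝ)
        = (((2*n+1).choose (n+1)):ℝ) * ((2*(n:ℝ)+2)*(2*(n:ℝ)+3))/(((n:ℝ)+1)*((n:ℝ)+2)) := by
      rw [eq_div_iff (by positivity)]
      linear_combination cC n
    have hC20 : (((2*n).choose (n+1)):ℝ)
        = (((2*n+1).choose (n+1)):ℝ) * (n:ℝ)/(2*(n:ℝ)+1) := by
      rw [eq_div_iff (by positivity)]
      linear_combination cB n
    rw [hC23, hC20]
    have h1 : H (n+1) = H n + 1/((n:ℝ)+1) := by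
      rw [H_succ]
    have h2 : H (n+2) = H n + 1/((n:ℝ)+1) + 1/((n:ℝ)+2) := by
      rw [show n+2 = (n+1)+1 from rfl, H_succ, H_succ]
      push_cast; ring
    have h3 : H (2*n+3) = H (2*n+1) + 1/(2*(n:ℝ)+2) + 1/(2*(n:ℝ)+3) := by
      rw [show 2*n+3 = (2*n+2)+1 from rfl, H_succ,
          show 2*n+2 = (2*n+1)+1 from rfl, H_succ]
      push_cast; ring
    have h4 : H2 (2*n+3) = H2 (2*n+1) + 1/(2*(n:ℝ)+2)^2 + 1/(2*(n:ℝ)+3)^2 := by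
      rw [show 2*n+3 = (2*n+2)+1 from rfl, H2_succ,
          show 2*n+2 = (2*n+1)+1 from rfl, H2_succ]
      push_cast; ring
    rw [h4, h3, h2, h1]
    push_cast
    have d1 : ((n:ℝ)+1) ≠ 0 := by positivity
    have d2 : ((n:ℝ)+2) ≠ 0 := by positivity
    have d3 : (2*(n:ℝ)+1) ≠ 0 := by positivity
    have d4 : (2*(n:ℝ)+2) ≠ 0 := by positivity
    have d5 : (2*(n:ℝ)+3) ≠ 0 := by positivity
    field_simp
    ring

lemma N4 (n i : ℕ) (h : i < n) :
    ((2*n-i).choose (n+1)) * (2*n+1-i) = ((2*n+1-i).choose (n+1)) * (n-i) := by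
  have h2 := Nat.choose_mul_succ_eq (2*n-i) (n+1)
  rw [show 2*n-i+1 = 2*n+1-i by omega] at h2
  rw [show 2*n+1-i-(n+1) = n-i by omega] at h2
  exact h2

lemma E4 (n i : ℕ) (h : i < n) :
    ((2*n-i).choose (n+1) : ℝ) * (2*(n:ℝ)+1-i) = ((2*n+1-i).choose (n+1) : ℝ) * ((n:ℝ)-i) := by
  have h2 := congrArg (Nat.cast (R := ℝ)) (N4 n i h)
  push_cast [Nat.cast_sub (by omega : i ≤ 2*n+1), Nat.cast_sub (by omega : i ≤ n)] at h2
  linear_combination h2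

noncomputable def Vfun (n : ℕ) : ℕ → ℝ :=
  fun i => -((((n:ℝ)+1)*((i:ℝ)+1)+2*(n:ℝ)+3) * (((2*n+1-i).choose (n+1) : ℕ):ℝ) * H (i+1))
      /(((n:ℝ)+1)*((n:ℝ)+2)^2)

lemma certZ (n i : ℕ) (h : i ≤ n) :
    ((2*n+2-i).choose (n+2) : ℝ) * H (i+1)/((i:ℝ)+1)
      = (2*(n:ℝ)+2)*(2*(n:ℝ)+3)*((2*n-i).choose (n+1) : ℝ) * H (i+1)
          /(((n:ℝ)+1)*((n:ℝ)+2)*((i:ℝ)+1))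
        + (Vfun n (i+1) - Vfun n i)
        + (((n:ℝ)+1)*((i:ℝ)+2)+2*(n:ℝ)+3)*((2*n-i).choose (n+1) : ℝ)
          /(((i:ℝ)+2)*(((n:ℝ)+1)*((n:ℝ)+2)^2)) := by
  have hHs : H (i+1+1) = H (i+1) + 1/((i:ℝ)+2) := by
    rw [H_succ]
    push_cast; ring
  rcases eq_or_lt_of_le h with rfl | hlt
  · -- i = n
    simp only [Vfun, hHs]
    rw [show 2*i+2-i = i+2 by omega, show 2*i-i = i by omega,
        show 2*i+1-(i+1) = i by omega, show 2*i+1-i = i+1 by omega]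
    rw [Nat.choose_self, Nat.choose_self, show (i:ℕ).choose (i+1) = 0 from Nat.choose_eq_zero_of_lt (by omega)]
    push_cast
    have h1 : ((i:ℝ)+1) ≠ 0 := by positivity
    have h2 : ((i:ℝ)+2) ≠ 0 := by positivity
    field_simp
    ring
  · -- i < n
    have hnz1 : ((n:ℝ)-i) ≠ 0 := by
      have : (i:ℝ) < n := by exact_mod_cast hlt
      linarith
    have e1 := E1 n i hlt
    have e2 := E2 n i hlt
    have e4 := E4 n i hlt
    have hb : ((2*n+2-i).choose (n+2) : ℝ)
        = (2*(n:ℝ)+2-i)*(2*(n:ℝ)+1-i)*((2*n-i).choose (n+1) : ℝ)/(((n:ℝ)+2)*((n:ℝ)-i)) := by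
      rw [eq_div_iff (mul_ne_zero (by positivity) hnz1)]
      linear_combination (-((n:ℝ)+2))*e2 - (2*(n:ℝ)+2-(i:ℝ))*e1
    have hd : ((2*n+1-i).choose (n+1) : ℝ)
        = (2*(n:ℝ)+1-i)*((2*n-i).choose (n+1) : ℝ)/((n:ℝ)-i) := by
      rw [eq_div_iff hnz1]
      linear_combination -e4
    simp only [Vfun, hHs]
    rw [show 2*n+1-(i+1) = 2*n-i by omega]
    rw [hb, hd]
    have d1 : ((i:ℝ)+1) ≠ 0 := by positivity
    have d2 : ((i:ℝ)+2) ≠ 0 := by positivity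
    have d3 : ((n:ℝ)+1) ≠ 0 := by positivity
    have d4 : ((n:ℝ)+2) ≠ 0 := by positivity
    push_cast
    field_simp
    ring

lemma L1c (n : ℕ) : ∑ i ∈ range (n+1), ((2*n-i).choose (n+1) : ℝ)/((i:ℝ)+2)
    = (((2*n+2).choose (n+1) : ℕ):ℝ) * (H (2*n+2) - H (n+1))
      - (((2*n+1).choose (n+1) : ℕ):ℝ) := by
  have h0 := L1 (2*n+1) (n+1)
  rw [show 2*n+1+1 = 2*n+2 from rfl] at h0
  rw [Finset.sum_range_succ'] at h0
  rw [show 2*n+1-0 = 2*n+1 by omega] at h0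
  have hre : ∑ k ∈ range (2*n+1), ((2*n+1-(k+1)).choose (n+1) : ℝ)/(((k+1:ℕ):ℝ)+1)
      = ∑ i ∈ range (n+1), ((2*n-i).choose (n+1) : ℝ)/((i:ℝ)+2) := by
    rw [show ∑ k ∈ range (2*n+1), ((2*n+1-(k+1)).choose (n+1) : ℝ)/(((k+1:ℕ):ℝ)+1)
        = ∑ k ∈ range (2*n+1), ((2*n-k).choose (n+1) : ℝ)/((k:ℝ)+2) from
      Finset.sum_congr rfl (fun k _ => by
        rw [show 2*n+1-(k+1) = 2*n-k by omega]
        push_cast; ring_nf)]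
    symm
    apply Finset.sum_subset
    · intro x hx
      simp only [Finset.mem_range] at hx ⊢
      omega
    · intro x hx hnx
      simp only [Finset.mem_range] at hx hnx
      rw [show (2*n-x).choose (n+1) = 0 from Nat.choose_eq_zero_of_lt (by omega)]
      simp
  rw [hre] at h0
  push_cast at h0
  linarith [h0]

lemma hockAR (n : ℕ) : ∑ i ∈ range (n+1), ((2*n-i).choose (n+1) : ℝ)
    = (((2*n+1).choose (n+2) : ℕ):ℝ) := by
  exact_mod_cast congrArg (Nat.cast (R := ℝ)) (hockA n)

lemma cD (n : ℕ) : (((2*n+1).choose (n+2)):ℝ) * ((n:ℝ)+2) = (((2*n+1).choose (n+1)):ℝ) * (n:ℝ) := by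
  have h2 := Nat.choose_succ_right_eq (2*n+1) (n+1)
  rw [show n+1+1 = n+2 from rfl, show 2*n+1-(n+1) = n by omega] at h2
  exact_mod_cast congrArg (Nat.cast (R := ℝ)) h2

lemma cE (n : ℕ) : (((2*n+2).choose (n+1)):ℝ) * ((n:ℝ)+1) = (((2*n+1).choose (n+1)):ℝ) * (2*(n:ℝ)+2) := by
  have h2 := Nat.add_one_mul_choose_eq (2*n+1) n
  rw [show 2*n+1+1 = 2*n+2 from rfl, hsymm n] at h2
  have h3 := congrArg (Nat.cast (R := ℝ)) h2
  push_cast at h3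
  linear_combination -h3

lemma L5 : ∀ n : ℕ, ∑ i ∈ range (n+1), ((2*n-i).choose (n+1) : ℝ) * H (i+1)/((i:ℝ)+1)
    = (((2*n+1).choose (n+1) : ℕ):ℝ)
      * ( H2 (n+1)/2 + (H n + H (n+1))/(2*((n:ℝ)+1)) - H (2*n+1)/((n:ℝ)+1) ) := by
  intro n
  induction n with
  | zero =>
    rw [Finset.sum_range_one]
    norm_num [H_zero, H_one, H2_succ, H2_zero, H]
  | succ n ih =>
    simp only [show 2*(n+1) = 2*n+2 from by ring, show n+1+1 = n+2 from rfl,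
      show 2*n+2+1 = 2*n+3 from rfl]
    rw [Finset.sum_range_succ]
    rw [show (2*n+2-(n+1)).choose (n+2) = 0 from Nat.choose_eq_zero_of_lt (by omega)]
    rw [Finset.sum_congr rfl (fun i hi => certZ n i (by
      simp only [Finset.mem_range] at hi; omega))]
    rw [Finset.sum_add_distrib, Finset.sum_add_distrib,
        Finset.sum_range_sub (Vfun n)]
    have hT1 : ∑ i ∈ range (n+1),
        (2*(n:ℝ)+2)*(2*(n:ℝ)+3)*((2*n-i).choose (n+1) : ℝ) * H (i+1)
          /(((n:ℝ)+1)*((n:ℝ)+2)*((i:ℝ)+1))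
        = ((2*(n:ℝ)+2)*(2*(n:ℝ)+3)/(((n:ℝ)+1)*((n:ℝ)+2)))
          * ∑ i ∈ range (n+1), ((2*n-i).choose (n+1) : ℝ) * H (i+1)/((i:ℝ)+1) := by
      rw [Finset.mul_sum]
      apply Finset.sum_congr rfl
      intro i _
      have h1 : ((i:ℝ)+1) ≠ 0 := by positivity
      have h2 : ((n:ℝ)+1) ≠ 0 := by positivity
      have h3 : ((n:ℝ)+2) ≠ 0 := by positivity
      field_simp
    have hT3 : ∑ i ∈ range (n+1),
        (((n:ℝ)+1)*((i:ℝ)+2)+2*(n:ℝ)+3)*((2*n-i).choose (n+1) : ℝ)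
          /(((i:ℝ)+2)*(((n:ℝ)+1)*((n:ℝ)+2)^2))
        = (((n:ℝ)+1)/(((n:ℝ)+1)*((n:ℝ)+2)^2)) * ∑ i ∈ range (n+1), ((2*n-i).choose (n+1) : ℝ)
          + ((2*(n:ℝ)+3)/(((n:ℝ)+1)*((n:ℝ)+2)^2))
            * ∑ i ∈ range (n+1), ((2*n-i).choose (n+1) : ℝ)/((i:ℝ)+2) := by
      rw [Finset.mul_sum, Finset.mul_sum, ← Finset.sum_add_distrib]
      apply Finset.sum_congr rfl
      intro i _
      have h1 : ((i:ℝ)+2) ≠ 0 := by positivity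
      have h2 : ((n:ℝ)+1) ≠ 0 := by positivity
      have h3 : ((n:ℝ)+2) ≠ 0 := by positivity
      field_simp
      ring
    rw [hT1, hT3, ih, L1c n, hockAR n]
    have hV1 : Vfun n (n+1) = 0 := by
      simp only [Vfun, show 2*n+1-(n+1) = n by omega]
      rw [show (n:ℕ).choose (n+1) = 0 from Nat.choose_eq_zero_of_lt (by omega)]
      simp
    have hV0 : Vfun n 0 = -((3*(n:ℝ)+4) * (((2*n+1).choose (n+1) : ℕ):ℝ))
        /(((n:ℝ)+1)*((n:ℝ)+2)^2) := by
      simp only [Vfun, Nat.sub_zero, Nat.cast_zero, zero_add, H_one]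
      push_cast
      ring
    rw [hV1, hV0]
    have hC23 : (((2*n+3).choose (n+2)):ℝ)
        = (((2*n+1).choose (n+1)):ℝ) * ((2*(n:ℝ)+2)*(2*(n:ℝ)+3))/(((n:ℝ)+1)*((n:ℝ)+2)) := by
      rw [eq_div_iff (by positivity)]
      linear_combination cC n
    have hCD : (((2*n+1).choose (n+2)):ℝ)
        = (((2*n+1).choose (n+1)):ℝ) * (n:ℝ)/((n:ℝ)+2) := by
      rw [eq_div_iff (by positivity)]
      linear_combination cD n
    have hCE : (((2*n+2).choose (n+1)):ℝ)
        = (((2*n+1).choose (n+1)):ℝ) * (2*(n:ℝ)+2)/((n:ℝ)+1) := by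
      rw [eq_div_iff (by positivity)]
      linear_combination cE n
    rw [hC23, hCD, hCE]
    have h1 : H (n+1) = H n + 1/((n:ℝ)+1) := by rw [H_succ]
    have h2 : H (n+2) = H n + 1/((n:ℝ)+1) + 1/((n:ℝ)+2) := by
      rw [show n+2 = (n+1)+1 from rfl, H_succ, H_succ]
      push_cast; ring
    have h3 : H (2*n+3) = H (2*n+1) + 1/(2*(n:ℝ)+2) + 1/(2*(n:ℝ)+3) := by
      rw [show 2*n+3 = (2*n+2)+1 from rfl, H_succ,
          show 2*n+2 = (2*n+1)+1 from rfl, H_succ]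
      push_cast; ring
    have h4 : H (2*n+2) = H (2*n+1) + 1/(2*(n:ℝ)+2) := by
      rw [show 2*n+2 = (2*n+1)+1 from rfl, H_succ]
      push_cast; ring
    have h5 : H2 (n+2) = H2 (n+1) + 1/((n:ℝ)+2)^2 := by
      rw [show n+2 = (n+1)+1 from rfl, H2_succ]
      push_cast; ring
    rw [h3, h4, h5, h2, h1]
    push_cast
    have d1 : ((n:ℝ)+1) ≠ 0 := by positivity
    have d2 : ((n:ℝ)+2) ≠ 0 := by positivity
    have d3 : (2*(n:ℝ)+1) ≠ 0 := by positivity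
    have d4 : (2*(n:ℝ)+2) ≠ 0 := by positivity
    have d5 : (2*(n:ℝ)+3) ≠ 0 := by positivity
    field_simp
    ring

lemma sq_H : ∀ k : ℕ, (H k)^2 = 2 * (∑ j ∈ range k, H (j+1)/((j:ℝ)+1)) - H2 k := by
  intro k
  induction k with
  | zero => simp [H_zero, H2_zero]
  | succ k ih =>
    rw [Finset.sum_range_succ, H_succ, H2_succ]
    have e : (1:ℝ)/(((k:ℝ))+1)^2 = (1/((k:ℝ)+1))^2 := by
      rw [div_pow, one_pow]
    rw [e]
    linear_combination ih

theorem stmt3 (n : ℕ) :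
    ∑ k ∈ Finset.range (n+1), (((2*n-k).choose n : ℕ) : ℝ) * (H k)^2
      = (1/2) * (((2*n+1).choose n : ℕ) : ℝ) *
        (2 * H2 (n+1) - H2 (2*n+1) + 2 * (H (n+1))^2 - (H n)^2
          + H (2*n+1) * (H (2*n+1) - 4 * H (n+1) + 2 * H n)) := by
  have step1 : ∀ k, (((2*n-k).choose n : ℕ) : ℝ) * (H k)^2
      = 2 * ((((2*n-k).choose n : ℕ) : ℝ) * (∑ j ∈ range k, H (j+1)/((j:ℝ)+1)))
        - (((2*n-k).choose n : ℕ) : ℝ) * (∑ j ∈ range k, (1:ℝ)/((j:ℝ)+1)^2) := by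
    intro k
    rw [sq_H k]
    simp only [H2]
    ring
  rw [Finset.sum_congr rfl (fun k _ => step1 k), Finset.sum_sub_distrib, ← Finset.mul_sum]
  rw [swap n (fun j => H (j+1)/((j:ℝ)+1)), swap n (fun j => (1:ℝ)/((j:ℝ)+1)^2)]
  have ext1 : ∑ j ∈ range n, ((2*n-j).choose (n+1) : ℝ) * (H (j+1)/((j:ℝ)+1))
      = ∑ j ∈ range (n+1), ((2*n-j).choose (n+1) : ℝ) * H (j+1)/((j:ℝ)+1) := by
    rw [Finset.sum_range_succ]
    rw [show (2*n-n).choose (n+1) = 0 from Nat.choose_eq_zero_of_lt (by omega)]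
    simp only [Nat.cast_zero, zero_mul, zero_div, add_zero]
    apply Finset.sum_congr rfl
    intro j _
    rw [mul_div_assoc]
  have ext2 : ∑ j ∈ range n, ((2*n-j).choose (n+1) : ℝ) * ((1:ℝ)/((j:ℝ)+1)^2)
      = ∑ j ∈ range (n+1), ((2*n-j).choose (n+1) : ℝ)/((j:ℝ)+1)^2 := by
    rw [Finset.sum_range_succ]
    rw [show (2*n-n).choose (n+1) = 0 from Nat.choose_eq_zero_of_lt (by omega)]
    simp only [Nat.cast_zero, zero_div, add_zero, zero_mul]
    apply Finset.sum_congr rfl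
    intro j _
    rw [mul_one_div]
  rw [ext1, ext2, L5 n, L2 n]
  have hs : (((2*n+1).choose n : ℕ):ℝ) = (((2*n+1).choose (n+1) : ℕ):ℝ) := by
    exact_mod_cast congrArg (Nat.cast (R := ℝ)) (hsymm n)
  rw [hs]
  have h1 : H (n+1) = H n + 1/((n:ℝ)+1) := H_succ n
  rw [h1]
  have d1 : ((n:ℝ)+1) ≠ 0 := by positivity
  field_simp
  ring
end

section
/- For all nonnegative integers m, ∑_{k=0}^{2m} (-2)^k C(2m,k) · k · H_k = 4m(2H_{2m} - H_m), where H_j is the j-th harmonic number. -/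
open Finset

lemma lemA (n : ℕ) : ∑ j ∈ range (n+1), (-2:ℝ)^j * (n.choose j : ℝ) / (j+1)
    = ((-1:ℝ)^(n+1) - 1)/(-2*(n+1)) := by
  have key : ∀ j ∈ range (n+1), (-2:ℝ)^j * (n.choose j : ℝ) / (j+1)
      = ((-2:ℝ)^(j+1) * ((n+1).choose (j+1) : ℝ)) / (-2*(n+1)) := by
    intro j _
    have h : ((n+1).choose (j+1)) * (j+1) = (n+1) * (n.choose j) :=
      (Nat.add_one_mul_choose_eq n j).symm
    have h' : (((n+1).choose (j+1) : ℕ) : ℝ) * ((j:ℝ)+1) = ((n:ℝ)+1) * (n.choose j : ℝ) := by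
      exact_mod_cast congrArg (Nat.cast : ℕ → ℝ) h
    have hj : (n.choose j : ℝ)/((j:ℝ)+1) = ((n+1).choose (j+1) : ℝ)/((n:ℝ)+1) := by
      rw [div_eq_div_iff (by positivity) (by positivity)]
      linarith
    rw [mul_div_assoc, hj, pow_succ]
    field_simp
  rw [sum_congr rfl key, ← sum_div]
  congr 1
  have h2 : ∑ j ∈ range (n+1), (-2:ℝ)^(j+1) * (((n+1).choose (j+1)) : ℝ)
      = ∑ i ∈ range (n+2), (-2:ℝ)^i * (((n+1).choose i) : ℝ) - 1 := by
    rw [Finset.sum_range_succ' (fun i => (-2:ℝ)^i * (((n+1).choose i) : ℝ)) (n+1)]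
    simp
  rw [h2, binsum]

noncomputable def f (n : ℕ) : ℝ := ∑ k ∈ range (n+1), (-2:ℝ)^k * (n.choose k : ℝ) * H k

lemma frec (n : ℕ) : f (n+1) = -f n + ((-1:ℝ)^(n+1) - 1)/(n+1) := by
  have h0 : f (n+1) = ∑ j ∈ range (n+1), (-2:ℝ)^(j+1) * (((n+1).choose (j+1)) : ℝ) * H (j+1) := by
    rw [f, Finset.sum_range_succ' (fun k => (-2:ℝ)^k * (((n+1).choose k) : ℝ) * H k) (n+1)]
    simp [H]
  have step : ∀ j ∈ range (n+1), (-2:ℝ)^(j+1) * (((n+1).choose (j+1)) : ℝ) * H (j+1)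
      = (-2)*((-2:ℝ)^j * (n.choose j : ℝ) * H j) + (-2)*((-2:ℝ)^j * (n.choose j : ℝ)/(j+1))
        + (-2:ℝ)^(j+1) * ((n.choose (j+1)) : ℝ) * H (j+1) := by
    intro j _
    have hp : (((n+1).choose (j+1) : ℕ) : ℝ) = (n.choose j : ℝ) + (n.choose (j+1) : ℝ) := by
      exact_mod_cast congrArg (Nat.cast : ℕ → ℝ) (Nat.choose_succ_succ n j)
    rw [hp, H_succ, pow_succ]
    push_cast
    ring
  rw [h0, sum_congr rfl step]
  rw [Finset.sum_add_distrib, Finset.sum_add_distrib, ← Finset.mul_sum, ← Finset.mul_sum]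
  have h1 : ∑ j ∈ range (n+1), (-2:ℝ)^j * (n.choose j : ℝ) * H j = f n := rfl
  have h3 : ∑ j ∈ range (n+1), (-2:ℝ)^(j+1) * ((n.choose (j+1)) : ℝ) * H (j+1) = f n := by
    rw [Finset.sum_range_succ, f,
      Finset.sum_range_succ' (fun k => (-2:ℝ)^k * ((n.choose k) : ℝ) * H k) n]
    simp [H, Nat.choose_succ_self]
  rw [h1, lemA, h3]
  have hn : ((n:ℝ)+1) ≠ 0 := by positivity
  field_simp
  ring

lemma feven (m : ℕ) : f (2*m) = 2 * H (2*m) - H m := by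
  induction m with
  | zero => simp [f, H]
  | succ M ih =>
    have e1 : 2*(M+1) = (2*M+1)+1 := by ring
    have e2 : 2*M+1 = (2*M)+1 := rfl
    rw [e1, frec, e2, frec, ih]
    have h1 : ((-1:ℝ))^(2*M+1+1) = 1 := by
      rw [show 2*M+1+1 = 2*(M+1) by ring, pow_mul]; norm_num
    have h2 : ((-1:ℝ))^(2*M+1) = -1 := by
      rw [pow_succ, pow_mul]; norm_num
    rw [h1, h2]
    simp only [H_succ]
    push_cast
    have hM1 : ((2:ℝ)*M+1) ≠ 0 := by positivity
    have hM2 : ((M:ℝ)+1) ≠ 0 := by positivity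
    field_simp
    ring

theorem stmt4 (m : ℕ) :
    ∑ k ∈ Finset.range (2*m+1), (-2:ℝ)^k * ((2*m).choose k : ℝ) * (k:ℝ) * H k
      = 4 * (m:ℝ) * (2 * H (2*m) - H m) := by
  cases m with
  | zero => simp [H]
  | succ M =>
    have hn2 : 2*(M+1) = 2*M+1+1 := by ring
    rw [hn2, Finset.sum_range_succ'
      (fun k => (-2:ℝ)^k * (((2*M+1+1).choose k) : ℝ) * (k:ℝ) * H k) (2*M+1+1)]
    simp only [Nat.cast_zero, mul_zero, zero_mul, add_zero]
    have step : ∀ j ∈ range (2*M+1+1), (-2:ℝ)^(j+1) * (((2*M+1+1).choose (j+1)) : ℝ) * (((j:ℕ)+1 : ℕ):ℝ) * H (j+1)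
        = (-2*(2*(M:ℝ)+2)) * ((-2:ℝ)^j * (((2*M+1).choose j) : ℝ) * H j)
          + (-2*(2*(M:ℝ)+2)) * ((-2:ℝ)^j * (((2*M+1).choose j) : ℝ) / (j+1)) := by
      intro j _
      have h : ((2*M+1+1).choose (j+1)) * (j+1) = (2*M+1+1) * ((2*M+1).choose j) :=
        (Nat.add_one_mul_choose_eq (2*M+1) j).symm
      have h' : (((2*M+1+1).choose (j+1) : ℕ) : ℝ) * ((j:ℝ)+1)
          = (2*(M:ℝ)+1+1) * (((2*M+1).choose j) : ℝ) := by
        exact_mod_cast congrArg (Nat.cast : ℕ → ℝ) h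
      have hj1 : ((j:ℝ)+1) ≠ 0 := by positivity
      have hC' : (((2*M+1+1).choose (j+1) : ℕ) : ℝ)
          = (2*(M:ℝ)+2) * (((2*M+1).choose j) : ℝ) / ((j:ℝ)+1) := by
        field_simp
        linarith
      rw [H_succ, pow_succ, hC']
      push_cast
      field_simp
      ring
    rw [sum_congr rfl step, Finset.sum_add_distrib, ← Finset.mul_sum, ← Finset.mul_sum]
    have h1 : ∑ j ∈ range (2*M+1+1), (-2:ℝ)^j * (((2*M+1).choose j) : ℝ) * H j = f (2*M+1) := rfl
    have h2 := lemA (2*M+1)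
    have h2' : ((-1:ℝ))^(2*M+1+1) = 1 := by
      rw [show 2*M+1+1 = 2*(M+1) by ring, pow_mul]; norm_num
    rw [h2'] at h2
    rw [h1, h2]
    have hf : f (2*M+1) = -(2 * H (2*M+1+1) - H (M+1)) := by
      have h5 := frec (2*M+1)
      rw [h2', show (2*M+1)+1 = 2*(M+1) by ring, feven, hn2] at h5
      norm_num at h5
      push_cast at h5 ⊢
      linarith
    rw [hf]
    push_cast
    field_simp
    ring
end

section
/- For every positive integer m, ∑_{k=0}^{2m} (-2)^k C(2m,k) · k^2 · H_k = 2·(2m)·(4m-1)·( 2H_{2m} - H_m - 1/(4m-1) ), where H_j is the j-th harmonic number. -/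
open Finset

lemma Hsucc (k : ℕ) : H (k+1) = H k + 1/(k+1) := by
  simp [H, Finset.sum_range_succ]

lemma tail_sum (n : ℕ) (h : ℕ → ℝ) (hz : h (n+1) = 0) :
    ∑ k ∈ range (n+1), h (k+1) = ∑ k ∈ range (n+1), h k - h 0 := by
  have e1 := Finset.sum_range_succ' h (n+1)
  have e2 := Finset.sum_range_succ h (n+1)
  rw [e2, hz, add_zero] at e1
  linarith [e1]

-- general Pascal shift lemma
lemma shift (n : ℕ) (g : ℕ → ℝ) :
    ∑ k ∈ range (n+2), (-2:ℝ)^k * ((n+1).choose k) * g k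
    = - (∑ k ∈ range (n+1), (-2:ℝ)^k * (n.choose k) * g k)
      + (-2) * ∑ k ∈ range (n+1), (-2:ℝ)^k * (n.choose k) * (g (k+1) - g k) := by
  rw [Finset.sum_range_succ' (fun k => (-2:ℝ)^k * ((n+1).choose k) * g k) (n+1)]
  have split : ∑ k ∈ range (n+1), (-2:ℝ)^(k+1) * ((n+1).choose (k+1)) * g (k+1)
      = (-2) * ∑ k ∈ range (n+1), (-2:ℝ)^k * (n.choose k) * g (k+1)
        + ∑ k ∈ range (n+1), (fun j => (-2:ℝ)^j * (n.choose j) * g j) (k+1) := by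
    rw [Finset.mul_sum, ← Finset.sum_add_distrib]
    apply Finset.sum_congr rfl
    intro k _
    have e1 : (((n+1).choose (k+1) : ℕ) : ℝ) = (n.choose k : ℝ) + (n.choose (k+1) : ℝ) := by
      rw [Nat.choose_succ_succ]; push_cast; ring
    rw [e1]; ring
  rw [split, tail_sum n (fun j => (-2:ℝ)^j * ((n.choose j : ℕ):ℝ) * g j) (by simp [Nat.choose_succ_self])]
  simp only [pow_zero, Nat.choose_zero_right, Nat.cast_one]
  have : ∑ k ∈ range (n+1), (-2:ℝ)^k * (n.choose k) * (g (k+1) - g k)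
      = ∑ k ∈ range (n+1), (-2:ℝ)^k * (n.choose k) * g (k+1)
        - ∑ k ∈ range (n+1), (-2:ℝ)^k * (n.choose k) * g k := by
    rw [← Finset.sum_sub_distrib]; apply Finset.sum_congr rfl; intros; ring
  rw [this]; ring

noncomputable def S0 (n : ℕ) : ℝ := ∑ k ∈ range (n+1), (-2:ℝ)^k * (n.choose k)
noncomputable def S1 (n : ℕ) : ℝ := ∑ k ∈ range (n+1), (-2:ℝ)^k * (n.choose k) * (k:ℝ)
noncomputable def SA (n : ℕ) : ℝ := ∑ k ∈ range (n+1), (-2:ℝ)^k * (n.choose k) * H k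
noncomputable def SB (n : ℕ) : ℝ := ∑ k ∈ range (n+1), (-2:ℝ)^k * (n.choose k) * ((k:ℝ) * H k)
noncomputable def SF (n : ℕ) : ℝ := ∑ k ∈ range (n+1), (-2:ℝ)^k * (n.choose k) * ((k:ℝ)^2 * H k)

lemma S0_eq (n : ℕ) : S0 n = (-1:ℝ)^n := by
  induction n with
  | zero => simp [S0]
  | succ n ih =>
    have h := shift n (fun _ => (1:ℝ))
    simp only [mul_one, sub_self, mul_zero, Finset.sum_const_zero, add_zero] at h
    have : S0 (n+1) = - S0 n := by
      unfold S0
      rw [show n+1+1 = n+2 from rfl]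
      convert h using 2 <;> simp
    rw [this, ih]; ring

lemma S0_eq' (n : ℕ) : ∑ k ∈ range (n+1), (-2:ℝ)^k * (n.choose k) * 1 = (-1:ℝ)^n := by
  simpa [mul_one, S0] using S0_eq n

lemma S1_eq (n : ℕ) : S1 n = 2 * n * (-1:ℝ)^n := by
  induction n with
  | zero => simp [S1]
  | succ n ih =>
    have h := shift n (fun k => (k:ℝ))
    have e : ∀ k : ℕ, ((k:ℝ)+1) - (k:ℝ) = 1 := by intro k; ring
    simp only [Nat.cast_add, Nat.cast_one, e] at h
    have h2 : S1 (n+1) = - S1 n + (-2) * S0 n := by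
      unfold S1 S0
      rw [show n+1+1 = n+2 from rfl]
      rw [h]
      congr 1
      simp
    rw [h2, ih, S0_eq]
    push_cast; ring

lemma E_eq (n : ℕ) : ∑ k ∈ range (n+1), (-2:ℝ)^k * (n.choose k) * (1/((k:ℝ)+1))
    = (1 + (-1:ℝ)^n) / (2*(n+1)) := by
  have key : ∀ k : ℕ, ((n:ℝ)+1) * ((-2:ℝ)^k * (n.choose k) * (1/((k:ℝ)+1)))
      = (-1/2) * ((-2:ℝ)^(k+1) * (((n+1).choose (k+1) : ℕ) : ℝ)) := by
    intro k
    have h := Nat.add_one_mul_choose_eq n k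
    have h' : ((n:ℝ)+1) * (n.choose k : ℝ) = (((n+1).choose (k+1) : ℕ) : ℝ) * ((k:ℝ)+1) := by
      exact_mod_cast congrArg (Nat.cast : ℕ → ℝ) h
    have hk : ((k:ℝ)+1) ≠ 0 := by positivity
    have e2 : ((n:ℝ)+1) * ((-2:ℝ)^k * (n.choose k) * (1/((k:ℝ)+1)))
        = (-2:ℝ)^k * ((((n:ℝ)+1) * (n.choose k)) / ((k:ℝ)+1)) := by ring
    rw [e2, h', pow_succ]
    field_simp
  have sum_eq : ((n:ℝ)+1) * ∑ k ∈ range (n+1), (-2:ℝ)^k * (n.choose k) * (1/((k:ℝ)+1))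
      = (-1/2) * ∑ k ∈ range (n+1), ((-2:ℝ)^(k+1) * (((n+1).choose (k+1) : ℕ) : ℝ)) := by
    rw [Finset.mul_sum, Finset.mul_sum]
    exact Finset.sum_congr rfl (fun k _ => key k)
  have shift_eq : ∑ k ∈ range (n+1), ((-2:ℝ)^(k+1) * (((n+1).choose (k+1) : ℕ) : ℝ))
      = S0 (n+1) - 1 := by
    have := Finset.sum_range_succ' (fun j => (-2:ℝ)^j * (((n+1).choose j : ℕ) : ℝ)) (n+1)
    unfold S0
    simp only [pow_zero, Nat.choose_zero_right, Nat.cast_one, mul_one] at this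
    linarith [this]
  have hn : ((n:ℝ)+1) ≠ 0 := by positivity
  rw [S0_eq] at shift_eq
  have : ((n:ℝ)+1) * (∑ k ∈ range (n+1), (-2:ℝ)^k * (n.choose k) * (1/((k:ℝ)+1)))
      = (-1/2) * ((-1:ℝ)^(n+1) - 1) := by rw [sum_eq, shift_eq]
  have goal2 : ((n:ℝ)+1) * ((1 + (-1:ℝ)^n) / (2*(n+1))) = (-1/2) * ((-1:ℝ)^(n+1) - 1) := by
    field_simp
    ring
  have := this.trans goal2.symm
  exact mul_left_cancel₀ hn this

lemma recA (n : ℕ) : SA (n+1) = - SA n - (1 + (-1:ℝ)^n)/((n:ℝ)+1) := by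
  have h := shift n H
  simp only [Hsucc] at h
  have e : ∀ k : ℕ, H k + 1/((k:ℝ)+1) - H k = 1/((k:ℝ)+1) := by intro k; ring
  simp only [e] at h
  unfold SA
  rw [show n+1+1 = n+2 from rfl, h, E_eq]
  field_simp
  ring

lemma recB (n : ℕ) : SB (n+1) = - SB n - 2 * SA n - 2 * (-1:ℝ)^n := by
  have h := shift n (fun k => (k:ℝ) * H k)
  have e : ∀ k : ℕ, (((k:ℕ)+1:ℕ):ℝ) * H (k+1) - (k:ℝ) * H k = (k:ℝ) * H k + H k + 1 - (k:ℝ) * H k := by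
    intro k
    push_cast
    rw [Hsucc]
    have hk : ((k:ℝ)+1) ≠ 0 := by positivity
    field_simp
  simp only [e] at h
  have expand : ∑ k ∈ range (n+1), (-2:ℝ)^k * (n.choose k) * ((k:ℝ) * H k + H k + 1 - (k:ℝ) * H k)
      = SA n + S0 n := by
    unfold SA S0
    rw [← Finset.sum_add_distrib]
    apply Finset.sum_congr rfl
    intros; ring
  rw [expand] at h
  unfold SB
  rw [show n+1+1 = n+2 from rfl, h, S0_eq]
  unfold SB SA at *
  ring

lemma recF (n : ℕ) : SF (n+1) = - SF n - 4 * SB n - 2 * SA n - 2 * (2*(n:ℝ)+1) * (-1:ℝ)^n := by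
  have h := shift n (fun k => (k:ℝ)^2 * H k)
  have e : ∀ k : ℕ, (((k:ℕ)+1:ℕ):ℝ)^2 * H (k+1) - (k:ℝ)^2 * H k
      = (k:ℝ)^2 * H k + 2*(k:ℝ)*H k + H k + (k:ℝ) + 1 - (k:ℝ)^2 * H k := by
    intro k
    push_cast
    rw [Hsucc]
    have hk : ((k:ℝ)+1) ≠ 0 := by positivity
    field_simp
    ring
  simp only [e] at h
  have expand : ∑ k ∈ range (n+1), (-2:ℝ)^k * (n.choose k) *
        ((k:ℝ)^2 * H k + 2*(k:ℝ)*H k + H k + (k:ℝ) + 1 - (k:ℝ)^2 * H k)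
      = 2 * SB n + SA n + S1 n + S0 n := by
    unfold SB SA S1 S0
    rw [Finset.mul_sum, ← Finset.sum_add_distrib, ← Finset.sum_add_distrib, ← Finset.sum_add_distrib]
    apply Finset.sum_congr rfl
    intros; ring
  rw [expand] at h
  unfold SF
  rw [show n+1+1 = n+2 from rfl, h, S0_eq, S1_eq]
  ring

lemma neg_one_even (m : ℕ) : ((-1:ℝ))^(2*m) = 1 := by
  rw [pow_mul]; norm_num

lemma neg_one_odd (m : ℕ) : ((-1:ℝ))^(2*m+1) = -1 := by
  rw [pow_succ, neg_one_even]; ring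

lemma key (m : ℕ) :
    SA (2*m) = 2 * H (2*m) - H m ∧
    SB (2*m) = 4*(m:ℝ) * (2 * H (2*m) - H m) ∧
    SF (2*m) = 4*(m:ℝ)*(4*(m:ℝ)-1) * (2 * H (2*m) - H m) - 4*(m:ℝ) := by
  induction m with
  | zero => simp [SA, SB, SF, H]
  | succ m ih =>
    obtain ⟨hA, hB, hF⟩ := ih
    have i1 : 2*(m+1) = (2*m+1)+1 := by ring
    have i2 : (2*m)+1 = 2*m+1 := rfl
    have hA1 := recA (2*m)
    have hA2 := recA (2*m+1)
    have hB1 := recB (2*m)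
    have hB2 := recB (2*m+1)
    have hF1 := recF (2*m)
    have hF2 := recF (2*m+1)
    rw [neg_one_even] at hA1 hB1 hF1
    rw [neg_one_odd] at hA2 hB2 hF2
    rw [hA1, hA] at hA2
    rw [hB1, hA1, hA, hB] at hB2
    rw [hF1, hB1, hA1, hA, hB, hF] at hF2
    push_cast at hA2 hB2 hF2
    have hH2 : H (2*m+1+1) = H (2*m) + 1/(2*(m:ℝ)+1) + 1/(2*(m:ℝ)+2) := by
      rw [Hsucc, Hsucc]
      push_cast; ring
    have hHm : H (m+1) = H m + 1/((m:ℝ)+1) := by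
      rw [Hsucc]
    have h1 : (2*(m:ℝ)+1) ≠ 0 := by positivity
    have h2 : (2*(m:ℝ)+2) ≠ 0 := by positivity
    have h3 : ((m:ℝ)+1) ≠ 0 := by positivity
    rw [i1, hH2, hHm]
    refine ⟨?_, ?_, ?_⟩
    · rw [hA2]; push_cast; field_simp; ring
    · rw [hB2]; push_cast; field_simp; ring
    · rw [hF2]; push_cast; field_simp; ring

theorem stmt6 (m : ℕ) (hm : 1 ≤ m) :
    ∑ k ∈ Finset.range (2*m+1), (-2:ℝ)^k * ((2*m).choose k : ℝ) * (k:ℝ)^2 * H k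
      = 2 * (2*(m:ℝ)) * (4*(m:ℝ)-1) * (2 * H (2*m) - H m - 1/(4*(m:ℝ)-1)) := by
  have hk := (key m).2.2
  have hsum : ∑ k ∈ Finset.range (2*m+1), (-2:ℝ)^k * ((2*m).choose k : ℝ) * (k:ℝ)^2 * H k = SF (2*m) := by
    unfold SF
    apply Finset.sum_congr rfl
    intros; ring
  rw [hsum, hk]
  have hm' : (1:ℝ) ≤ (m:ℝ) := by exact_mod_cast hm
  have h4 : (4*(m:ℝ)-1) ≠ 0 := by nlinarith
  field_simp
  ring
end

section
/- Let x be a complex number (or a real number with x not a negative integer) and n a nonnegative integer. Then ∑_{k=0}^{n} (-1)^k C(n,k) · [C(2x+n+k, k) / C(x+k, k)] · H_k equals H_m(x) + 2H_{2m} - H_m if n = 2m, and equals H_m - 2H_{2m+1} - H_m(x) if n = 2m+1, where H_j(x) = ∑_{i=1}^j 1/(x+i) and C(x+r, s) denotes the generalized binomial coefficient (x+r)(x+r-1)⋯(x+r-s+1)/s!. -/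
open Finset

noncomputable def Hx (x : ℝ) (n : ℕ) : ℝ := ∑ i ∈ Finset.range n, 1/(x+(i:ℝ)+1)
noncomputable def gch (y : ℝ) (s : ℕ) : ℝ := (∏ i ∈ Finset.range s, (y - (i:ℝ))) / (Nat.factorial s)

noncomputable def D (b : ℝ) (k : ℕ) : ℝ := ∏ i ∈ Finset.range k, (b + i + 1)

lemma D_ne {b : ℝ} (hb : ∀ i : ℕ, b + i + 1 ≠ 0) (k : ℕ) : D b k ≠ 0 :=
  Finset.prod_ne_zero_iff.2 (fun i _ => hb i)

lemma D_succ (b : ℝ) (k : ℕ) : D b (k+1) = D b k * (b + k + 1) := by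
  simp [D, Finset.prod_range_succ]

lemma D_shift (b : ℝ) (k : ℕ) : D b (k+1) = (b+1) * D (b+1) k := by
  rw [D, Finset.prod_range_succ']
  simp only [Nat.cast_zero]
  rw [mul_comm]
  congr 1
  · push_cast; ring
  · apply Finset.prod_congr rfl; intro i _; push_cast; ring

lemma vand : ∀ (n : ℕ) (a b : ℝ), (∀ i : ℕ, b + i + 1 ≠ 0) →
    ∑ k ∈ Finset.range (n+1), (-1:ℝ)^k * (n.choose k : ℝ) *
      ((∏ i ∈ Finset.range k, (a + i + 1)) / D b k)
    = (∏ i ∈ Finset.range n, (b - a + i)) / D b n := by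
  intro n
  induction n with
  | zero => intro a b hb; simp [D]
  | succ n ih =>
    intro a b hb
    have hb1 : ∀ i : ℕ, (b+1) + i + 1 ≠ 0 := by
      intro i; have := hb (i+1); push_cast at this ⊢
      intro h; exact this (by linarith)
    have hbn : b + n + 1 ≠ 0 := hb n
    have hb0 : b + 1 ≠ 0 := by have := hb 0; push_cast at this; simpa using this
    have hD := D_ne hb
    have hD1 := D_ne hb1
    rw [Finset.sum_range_succ']
    have term0 : (-1:ℝ)^0 * ((n+1).choose 0 : ℝ) *
        ((∏ i ∈ Finset.range 0, (a + i + 1)) / D b 0) = 1 := by simp [D]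
    rw [term0]
    have split : ∀ k ∈ Finset.range (n+1),
        (-1:ℝ)^(k+1) * ((n+1).choose (k+1) : ℝ) *
          ((∏ i ∈ Finset.range (k+1), (a + i + 1)) / D b (k+1))
        = (-1:ℝ)^(k+1) * (n.choose (k+1) : ℝ) *
            ((∏ i ∈ Finset.range (k+1), (a + i + 1)) / D b (k+1))
          + (-((a+1)/(b+1))) * ((-1:ℝ)^k * (n.choose k : ℝ) *
            ((∏ i ∈ Finset.range k, ((a+1) + i + 1)) / D (b+1) k)) := by
      intro k _
      rw [Nat.choose_succ_succ' n k]
      have hprod : (∏ i ∈ Finset.range (k+1), (a + i + 1))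
          = (a+1) * ∏ i ∈ Finset.range k, ((a+1) + i + 1) := by
        rw [Finset.prod_range_succ']
        simp only [Nat.cast_zero]
        rw [mul_comm]
        congr 1
        · push_cast; ring
        · apply Finset.prod_congr rfl; intro i _; push_cast; ring
      rw [hprod, D_shift]
      push_cast
      field_simp
      ring
    have reassemble : (∑ k ∈ Finset.range (n+1), (-1:ℝ)^(k+1) * (n.choose (k+1) : ℝ) *
          ((∏ i ∈ Finset.range (k+1), (a + i + 1)) / D b (k+1))) + 1
        = (∏ i ∈ Finset.range n, (b - a + i)) / D b n := by
      have e1 := Finset.sum_range_succ' (fun k => (-1:ℝ)^k * ((n.choose k : ℕ) : ℝ) *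
          ((∏ i ∈ Finset.range k, (a + (i:ℝ) + 1)) / D b k)) (n+1)
      calc (∑ k ∈ Finset.range (n+1), (-1:ℝ)^(k+1) * (n.choose (k+1) : ℝ) *
            ((∏ i ∈ Finset.range (k+1), (a + i + 1)) / D b (k+1))) + 1
          = ∑ k ∈ Finset.range (n+2), (-1:ℝ)^k * (n.choose k : ℝ) *
            ((∏ i ∈ Finset.range k, (a + i + 1)) / D b k) := by
            rw [e1]; norm_num [D]
        _ = ∑ k ∈ Finset.range (n+1), (-1:ℝ)^k * (n.choose k : ℝ) *
            ((∏ i ∈ Finset.range k, (a + i + 1)) / D b k) := by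
            rw [Finset.sum_range_succ]; simp
        _ = (∏ i ∈ Finset.range n, (b - a + i)) / D b n := ih a b hb
    rw [Finset.sum_congr rfl split, Finset.sum_add_distrib, ← Finset.mul_sum, ih (a+1) (b+1) hb1]
    have hprodN : (∏ i ∈ Finset.range n, ((b+1) - (a+1) + (i:ℝ)))
        = ∏ i ∈ Finset.range n, (b - a + (i:ℝ)) := by
      apply Finset.prod_congr rfl; intro i _; ring
    have hDn1 : D b (n+1) = D b n * (b + n + 1) := D_succ b n
    have h3 : D (b+1) n = D b n * (b + n + 1) / (b+1) := by
      have hDrel : (b+1) * D (b+1) n = D b n * (b + n + 1) := by rw [← D_shift, D_succ]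
      field_simp
      linarith [hDrel]
    rw [hprodN, h3, Finset.prod_range_succ, hDn1]
    have hS : (∑ k ∈ Finset.range (n+1), (-1:ℝ)^(k+1) * (n.choose (k+1) : ℝ) *
          ((∏ i ∈ Finset.range (k+1), (a + i + 1)) / D b (k+1)))
        = (∏ i ∈ Finset.range n, (b - a + i)) / D b n - 1 := by linarith [reassemble]
    have hDn' : D b n ≠ 0 := hD n
    rw [hS]
    field_simp
    ring

lemma prod_reflect_D (b : ℝ) (p : ℕ) :
    ∏ i ∈ Finset.range p, (b + p - i) = D b p := by
  rw [D, ← Finset.prod_range_reflect (fun i => b + (i:ℝ) + 1) p]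
  apply Finset.prod_congr rfl
  intro i hi
  rw [Finset.mem_range] at hi
  have h1 : p - 1 - i = p - (i+1) := by omega
  rw [h1, Nat.cast_sub (by omega : i+1 ≤ p)]
  push_cast; ring

lemma diag (p : ℕ) (b : ℝ) (hb : ∀ i : ℕ, b + i + 1 ≠ 0) :
    ∑ k ∈ Finset.range (p+1), (-1:ℝ)^k * (p.choose k : ℝ) *
      ((∏ i ∈ Finset.range k, (2*b + p + i + 1)) / D b k) = (-1)^p := by
  have h := vand p (2*b + (p:ℝ)) b hb
  have e : ∀ k ∈ Finset.range (p+1), (-1:ℝ)^k * (p.choose k : ℝ) *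
      ((∏ i ∈ Finset.range k, (2*b + p + i + 1)) / D b k)
      = (-1:ℝ)^k * (p.choose k : ℝ) *
      ((∏ i ∈ Finset.range k, ((2*b + (p:ℝ)) + i + 1)) / D b k) := by
    intro k _
    congr 1
  rw [Finset.sum_congr rfl e, h]
  have hnum : (∏ i ∈ Finset.range p, (b - (2*b + (p:ℝ)) + i))
      = (-1:ℝ)^p * D b p := by
    have e2 : ∀ i ∈ Finset.range p, (b - (2*b + (p:ℝ)) + i) = (-1) * (b + p - i) := by
      intro i _; ring
    rw [Finset.prod_congr rfl e2, Finset.prod_mul_distrib, Finset.prod_const,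
      Finset.card_range, prod_reflect_D]
  rw [hnum]
  rw [mul_div_assoc, div_self (D_ne hb p), mul_one]

lemma alt_choose_succ (k : ℕ) :
    ∑ j ∈ Finset.range (k+1), (-1:ℝ)^j * ((k+1).choose (j+1) : ℝ) = 1 := by
  have h0 : ∑ i ∈ Finset.range (k+2), (-1:ℤ)^i * ((k+1).choose i : ℤ) = 0 := by
    rw [Int.alternating_sum_range_choose]
    simp
  have h1 : ∑ i ∈ Finset.range (k+2), (-1:ℝ)^i * ((k+1).choose i : ℝ) = 0 := by
    have := congrArg (fun z : ℤ => (z : ℝ)) h0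
    push_cast at this
    convert this using 2 <;> push_cast <;> ring_nf
  rw [Finset.sum_range_succ'] at h1
  simp only [pow_zero, Nat.choose_zero_right, Nat.cast_one, one_mul] at h1
  have : ∑ j ∈ Finset.range (k+1), (-1:ℝ)^(j+1) * ((k+1).choose (j+1) : ℝ) = -1 := by
    linarith
  calc ∑ j ∈ Finset.range (k+1), (-1:ℝ)^j * ((k+1).choose (j+1) : ℝ)
      = -∑ j ∈ Finset.range (k+1), (-1:ℝ)^(j+1) * ((k+1).choose (j+1) : ℝ) := by
        rw [← Finset.sum_neg_distrib]
        apply Finset.sum_congr rfl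
        intro j _; ring
    _ = 1 := by rw [this]; norm_num

lemma choose_div_succ (k j : ℕ) :
    (k.choose j : ℝ) / (j+1) = ((k+1).choose (j+1) : ℝ) / (k+1) := by
  have h := Nat.add_one_mul_choose_eq k j
  have h2 : ((k+1) * k.choose j : ℕ) = ((k+1).choose (j+1) * (j+1) : ℕ) := by
    simpa [Nat.succ_eq_add_one] using h
  have h3 : ((k:ℝ)+1) * (k.choose j : ℝ) = ((k+1).choose (j+1) : ℝ) * ((j:ℝ)+1) := by
    exact_mod_cast congrArg (fun z : ℕ => (z:ℝ)) h2
  have hj : ((j:ℝ)+1) ≠ 0 := by positivity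
  have hk : ((k:ℝ)+1) ≠ 0 := by positivity
  field_simp
  linarith [h3]

lemma Hk (k : ℕ) : H k = ∑ j ∈ Finset.range k, (-1:ℝ)^j * (k.choose (j+1) : ℝ) / (j+1) := by
  induction k with
  | zero => simp [H]
  | succ k ih =>
    rw [H_succ, ih]
    have split : ∀ j ∈ Finset.range (k+1),
        (-1:ℝ)^j * ((k+1).choose (j+1) : ℝ) / (j+1)
        = (-1:ℝ)^j * (k.choose (j+1) : ℝ) / (j+1)
          + (-1:ℝ)^j * (k.choose j : ℝ) / (j+1) := by
      intro j _
      rw [Nat.choose_succ_succ' k j]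
      push_cast
      ring
    rw [Finset.sum_congr rfl split, Finset.sum_add_distrib]
    have first : ∑ j ∈ Finset.range (k+1), (-1:ℝ)^j * (k.choose (j+1) : ℝ) / (j+1)
        = ∑ j ∈ Finset.range k, (-1:ℝ)^j * (k.choose (j+1) : ℝ) / (j+1) := by
      rw [Finset.sum_range_succ, Nat.choose_succ_self]
      simp
    have second : ∑ j ∈ Finset.range (k+1), (-1:ℝ)^j * (k.choose j : ℝ) / (j+1)
        = 1/(k+1) := by
      have e : ∀ j ∈ Finset.range (k+1), (-1:ℝ)^j * (k.choose j : ℝ) / (j+1)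
          = ((-1:ℝ)^j * ((k+1).choose (j+1) : ℝ)) * (1/(k+1)) := by
        intro j _
        rw [mul_div_assoc, choose_div_succ]
        ring
      rw [Finset.sum_congr rfl e, ← Finset.sum_mul, alt_choose_succ]
      ring
    rw [first, second]

lemma Hk_ext (k n : ℕ) (hkn : k ≤ n) :
    H k = ∑ j ∈ Finset.range n, (-1:ℝ)^j * (k.choose (j+1) : ℝ) / (j+1) := by
  rw [Hk]
  apply Finset.sum_subset
  · exact Finset.range_subset_range.2 hkn
  · intro j _ hj
    rw [Finset.mem_range, not_lt] at hj
    rw [Nat.choose_eq_zero_of_lt (by omega)]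
    simp

lemma gch_ratio (x : ℝ) (hx : ∀ i : ℕ, 1 ≤ i → x + (i:ℝ) ≠ 0) (n k : ℕ) :
    gch (2*x + n + k) k / gch (x + k) k
    = (∏ i ∈ Finset.range k, (2*x + n + i + 1)) / D x k := by
  have hxD : ∀ i : ℕ, x + i + 1 ≠ 0 := by
    intro i; have := hx (i+1) (by omega); push_cast at this
    intro hcon; apply this; linarith
  have hfac : ((k.factorial : ℕ) : ℝ) ≠ 0 := by
    exact_mod_cast Nat.factorial_ne_zero k
  have hden : (∏ i ∈ Finset.range k, ((x + (k:ℝ)) - i)) = D x k :=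
    prod_reflect_D x k
  have hnum : (∏ i ∈ Finset.range k, ((2*x + (n:ℝ) + k) - i))
      = ∏ i ∈ Finset.range k, (2*x + n + i + 1) := by
    rw [← Finset.prod_range_reflect (fun i => 2*x + (n:ℝ) + (i:ℝ) + 1) k]
    apply Finset.prod_congr rfl
    intro i hi
    rw [Finset.mem_range] at hi
    have h1 : k - 1 - i = k - (i+1) := by omega
    rw [h1, Nat.cast_sub (by omega : i+1 ≤ k)]
    push_cast; ring
  rw [gch, gch, hden, hnum, div_div_div_comm, div_self hfac, div_one]

lemma innerSwapSum (x : ℝ) (hxD : ∀ i : ℕ, x + i + 1 ≠ 0) (n J : ℕ) (hJn : J ≤ n) :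
    ∑ k ∈ Finset.range (n+1), (-1:ℝ)^k * (n.choose k : ℝ) * (k.choose J : ℝ) *
      ((∏ i ∈ Finset.range k, (2*x + n + i + 1)) / D x k)
    = (-1:ℝ)^n * (n.choose J : ℝ) *
      ((∏ i ∈ Finset.range J, (2*x + n + i + 1)) / D x J) := by
  have hsplit : n + 1 = J + (n + 1 - J) := by omega
  rw [hsplit, Finset.sum_range_add]
  have first : ∑ k ∈ Finset.range J, (-1:ℝ)^k * (n.choose k : ℝ) * (k.choose J : ℝ) *
      ((∏ i ∈ Finset.range k, (2*x + n + i + 1)) / D x k) = 0 := by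
    apply Finset.sum_eq_zero
    intro k hk
    rw [Finset.mem_range] at hk
    rw [Nat.choose_eq_zero_of_lt hk]
    simp
  rw [first, zero_add]
  have hbJ : ∀ i : ℕ, (x + (J:ℝ)) + i + 1 ≠ 0 := by
    intro i; have := hxD (J + i); push_cast at this ⊢
    intro h; exact this (by linarith)
  have hterm : ∀ l ∈ Finset.range (n + 1 - J),
      (-1:ℝ)^(J+l) * (n.choose (J+l) : ℝ) * ((J+l).choose J : ℝ) *
        ((∏ i ∈ Finset.range (J+l), (2*x + n + i + 1)) / D x (J+l))
      = ((-1:ℝ)^J * (n.choose J : ℝ) *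
          ((∏ i ∈ Finset.range J, (2*x + n + i + 1)) / D x J)) *
        ((-1:ℝ)^l * ((n-J).choose l : ℝ) *
          ((∏ i ∈ Finset.range l, (2*(x + (J:ℝ)) + ((n-J : ℕ):ℝ) + i + 1)) / D (x + (J:ℝ)) l)) := by
    intro l hl
    rw [Finset.mem_range] at hl
    have hJl : J + l ≤ n := by omega
    have hcm := Nat.choose_mul (n := n) (Nat.le_add_right J l)
    have hcm' : ((n.choose (J+l) : ℕ) : ℝ) * (((J+l).choose J : ℕ) : ℝ)
        = ((n.choose J : ℕ) : ℝ) * (((n-J).choose ((J+l)-J) : ℕ) : ℝ) := by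
      exact_mod_cast congrArg (fun z : ℕ => (z : ℝ)) hcm
    rw [Nat.add_sub_cancel_left] at hcm'
    have hprod : (∏ i ∈ Finset.range (J+l), (2*x + n + i + 1))
        = (∏ i ∈ Finset.range J, (2*x + n + i + 1)) *
          ∏ i ∈ Finset.range l, (2*(x + (J:ℝ)) + ((n-J : ℕ):ℝ) + i + 1) := by
      rw [Finset.prod_range_add]
      congr 1
      apply Finset.prod_congr rfl
      intro i _
      rw [Nat.cast_sub hJn]
      push_cast; ring
    have hD : D x (J+l) = D x J * D (x + (J:ℝ)) l := by
      rw [D, D, D, Finset.prod_range_add]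
      congr 1
      apply Finset.prod_congr rfl
      intro i _
      push_cast; ring
    rw [hprod, hD, pow_add]
    linear_combination ((-1:ℝ)^J * (-1:ℝ)^l *
      (∏ i ∈ Finset.range J, (2*x + (n:ℝ) + i + 1)) *
      (∏ i ∈ Finset.range l, (2*(x + (J:ℝ)) + ((n-J : ℕ):ℝ) + i + 1)) /
      (D x J * D (x + (J:ℝ)) l)) * hcm'
  rw [Finset.sum_congr rfl hterm, ← Finset.mul_sum]
  have hrange : n + 1 - J = (n - J) + 1 := by omega
  rw [hrange, diag (n-J) (x + (J:ℝ)) hbJ]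
  have hpow : ((-1:ℝ))^J * ((-1:ℝ))^(n-J) = (-1:ℝ)^n := by
    rw [← pow_add]; congr 1; omega
  linear_combination ((n.choose J : ℝ) *
    ((∏ i ∈ Finset.range J, (2*x + (n:ℝ) + i + 1)) / D x J)) * hpow

lemma swap_eval (x : ℝ) (hxD : ∀ i : ℕ, x + (i:ℝ) + 1 ≠ 0) (n : ℕ) :
    ∑ k ∈ Finset.range (n+1), (-1:ℝ)^k * (n.choose k : ℝ) *
      ((∏ i ∈ Finset.range k, (2*x + n + i + 1)) / D x k) * H k
    = (-1:ℝ)^n * ∑ j ∈ Finset.range n, (-1:ℝ)^j * (n.choose (j+1) : ℝ) *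
      ((∏ i ∈ Finset.range (j+1), (2*x + n + i + 1)) / D x (j+1)) / (j+1) := by
  have step1 : ∀ k ∈ Finset.range (n+1), (-1:ℝ)^k * (n.choose k : ℝ) *
      ((∏ i ∈ Finset.range k, (2*x + n + i + 1)) / D x k) * H k =
      ∑ j ∈ Finset.range n, (-1:ℝ)^k * (n.choose k:ℝ) *
        ((∏ i ∈ Finset.range k, (2*x + n + i + 1)) / D x k) *
        ((-1:ℝ)^j * (k.choose (j+1):ℝ) / (j+1)) := by
    intro k hk; rw [Finset.mem_range] at hk
    rw [Hk_ext k n (by omega), Finset.mul_sum]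
  rw [Finset.sum_congr rfl step1, Finset.sum_comm, Finset.mul_sum]
  apply Finset.sum_congr rfl
  intro j hj; rw [Finset.mem_range] at hj
  have e : ∀ k ∈ Finset.range (n+1), (-1:ℝ)^k * (n.choose k:ℝ) *
      ((∏ i ∈ Finset.range k, (2*x + n + i + 1)) / D x k) *
      ((-1:ℝ)^j * (k.choose (j+1):ℝ) / (j+1))
      = ((-1:ℝ)^j / (j+1)) * ((-1:ℝ)^k * (n.choose k:ℝ) * (k.choose (j+1):ℝ) *
        ((∏ i ∈ Finset.range k, (2*x + n + i + 1)) / D x k)) := by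
    intro k _; ring
  rw [Finset.sum_congr rfl e, ← Finset.mul_sum, innerSwapSum x hxD n (j+1) (by omega)]
  ring

lemma xiY (x : ℝ) (hxD : ∀ i : ℕ, x + (i:ℝ) + 1 ≠ 0) (a : ℝ) : ∀ n : ℕ,
    ∑ j ∈ Finset.range n, (-1:ℝ)^j * (n.choose (j+1) : ℝ) *
      ((∏ i ∈ Finset.range (j+1), (a + i + 1)) / D x (j+1)) / (j+1)
    = ∑ ν ∈ Finset.range n,
        (1 - (∏ i ∈ Finset.range (ν+1), (x - a + i)) / D x (ν+1)) / (ν+1) := by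
  intro n
  induction n with
  | zero => simp
  | succ n ih =>
    have split : ∀ j ∈ Finset.range (n+1),
        (-1:ℝ)^j * ((n+1).choose (j+1) : ℝ) *
          ((∏ i ∈ Finset.range (j+1), (a + i + 1)) / D x (j+1)) / (j+1)
        = (-1:ℝ)^j * (n.choose (j+1) : ℝ) *
            ((∏ i ∈ Finset.range (j+1), (a + i + 1)) / D x (j+1)) / (j+1)
          + (-1:ℝ)^j * (n.choose j : ℝ) *
            ((∏ i ∈ Finset.range (j+1), (a + i + 1)) / D x (j+1)) / (j+1) := by
      intro j _
      rw [Nat.choose_succ_succ' n j]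
      push_cast
      ring
    rw [Finset.sum_congr rfl split, Finset.sum_add_distrib]
    have first : ∑ j ∈ Finset.range (n+1), (-1:ℝ)^j * (n.choose (j+1) : ℝ) *
          ((∏ i ∈ Finset.range (j+1), (a + i + 1)) / D x (j+1)) / (j+1)
        = ∑ ν ∈ Finset.range n,
          (1 - (∏ i ∈ Finset.range (ν+1), (x - a + i)) / D x (ν+1)) / (ν+1) := by
      rw [Finset.sum_range_succ, Nat.choose_succ_self]
      simpa using ih
    have second : ∑ j ∈ Finset.range (n+1), (-1:ℝ)^j * (n.choose j : ℝ) *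
          ((∏ i ∈ Finset.range (j+1), (a + i + 1)) / D x (j+1)) / (j+1)
        = (1 - (∏ i ∈ Finset.range (n+1), (x - a + i)) / D x (n+1)) / (n+1) := by
      have e : ∀ j ∈ Finset.range (n+1), (-1:ℝ)^j * (n.choose j : ℝ) *
            ((∏ i ∈ Finset.range (j+1), (a + i + 1)) / D x (j+1)) / (j+1)
          = ((-1:ℝ)^j * ((n+1).choose (j+1) : ℝ) *
            ((∏ i ∈ Finset.range (j+1), (a + i + 1)) / D x (j+1))) * (1/(n+1)) := by
        intro j _
        have h := choose_div_succ n j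
        calc (-1:ℝ)^j * (n.choose j : ℝ) *
              ((∏ i ∈ Finset.range (j+1), (a + i + 1)) / D x (j+1)) / (j+1)
            = ((n.choose j : ℝ) / (j+1)) * ((-1:ℝ)^j *
              ((∏ i ∈ Finset.range (j+1), (a + i + 1)) / D x (j+1))) := by ring
          _ = (((n+1).choose (j+1) : ℝ) / (n+1)) * ((-1:ℝ)^j *
              ((∏ i ∈ Finset.range (j+1), (a + i + 1)) / D x (j+1))) := by rw [h]
          _ = ((-1:ℝ)^j * ((n+1).choose (j+1) : ℝ) *
              ((∏ i ∈ Finset.range (j+1), (a + i + 1)) / D x (j+1))) * (1/(n+1)) := by ring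
      rw [Finset.sum_congr rfl e, ← Finset.sum_mul]
      have hv := vand (n+1) a x hxD
      rw [Finset.sum_range_succ'] at hv
      have h0 : (-1:ℝ)^0 * (((n+1).choose 0 : ℕ) : ℝ) *
          ((∏ i ∈ Finset.range 0, (a + i + 1)) / D x 0) = 1 := by simp [D]
      rw [h0] at hv
      have hA : ∑ j ∈ Finset.range (n+1), (-1:ℝ)^j * (((n+1).choose (j+1) : ℕ) : ℝ) *
            ((∏ i ∈ Finset.range (j+1), (a + i + 1)) / D x (j+1))
          = 1 - (∏ i ∈ Finset.range (n+1), (x - a + i)) / D x (n+1) := by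
        have : ∑ j ∈ Finset.range (n+1), (-1:ℝ)^(j+1) * (((n+1).choose (j+1) : ℕ) : ℝ) *
              ((∏ i ∈ Finset.range (j+1), (a + i + 1)) / D x (j+1))
            = - ∑ j ∈ Finset.range (n+1), (-1:ℝ)^j * (((n+1).choose (j+1) : ℕ) : ℝ) *
              ((∏ i ∈ Finset.range (j+1), (a + i + 1)) / D x (j+1)) := by
          rw [← Finset.sum_neg_distrib]
          apply Finset.sum_congr rfl
          intro j _; ring
        rw [this] at hv
        linarith
      rw [hA]
      ring
    rw [first, second, Finset.sum_range_succ]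

lemma Nbar (x : ℝ) (hxD : ∀ i : ℕ, x + (i:ℝ) + 1 ≠ 0) :
    ∀ (p n : ℕ), p ≤ n → (∏ i ∈ Finset.range p, (x + n - i)) = D x n / D x (n - p) := by
  intro p
  induction p with
  | zero => intro n _; simp [div_self (D_ne hxD n)]
  | succ p ih =>
    intro n hp
    rw [Finset.prod_range_succ, ih n (by omega)]
    have e : n - p = (n - (p+1)) + 1 := by omega
    have h2 : (x + ((n - (p+1) : ℕ):ℝ) + 1) = x + (n:ℝ) - (p:ℝ) := by
      rw [Nat.cast_sub hp]; push_cast; ring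
    have h1 : D x (n - p) = D x (n - (p+1)) * (x + (n:ℝ) - (p:ℝ)) := by
      rw [e, D_succ, h2]
    have hne1 : D x (n - (p+1)) ≠ 0 := D_ne hxD _
    have hne2 : x + (n:ℝ) - (p:ℝ) ≠ 0 := by
      rw [← h2]; exact hxD (n - (p+1))
    rw [h1]
    field_simp

noncomputable def Zs (x : ℝ) (n : ℕ) : ℝ :=
  ∑ ν ∈ Finset.range n, (-1:ℝ)^ν * (D x n / (D x (n-1-ν) * D x (ν+1))) / (ν+1)

lemma Ssum_val (x : ℝ) (hxD : ∀ i : ℕ, x + (i:ℝ) + 1 ≠ 0) (n : ℕ) :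
    ∑ k ∈ Finset.range (n+1), (-1:ℝ)^k * (n.choose k : ℝ) *
      ((∏ i ∈ Finset.range k, (2*x + n + i + 1)) / D x k) * H k
    = (-1:ℝ)^n * (H n + Zs x n) := by
  rw [swap_eval x hxD n, xiY x hxD (2*x + (n:ℝ)) n]
  congr 1
  have e : ∀ ν ∈ Finset.range n,
      (1 - (∏ i ∈ Finset.range (ν+1), (x - (2*x + (n:ℝ)) + i)) / D x (ν+1)) / (ν+1)
      = (1:ℝ)/(ν+1) + (-1:ℝ)^ν * (D x n / (D x (n-1-ν) * D x (ν+1))) / (ν+1) := by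
    intro ν hν
    rw [Finset.mem_range] at hν
    have e2 : ∀ i ∈ Finset.range (ν+1), (x - (2*x + (n:ℝ)) + i) = (-1) * (x + n - i) := by
      intro i _; ring
    rw [Finset.prod_congr rfl e2, Finset.prod_mul_distrib, Finset.prod_const,
      Finset.card_range, Nbar x hxD (ν+1) n (by omega)]
    have e3 : n - (ν+1) = n - 1 - ν := by omega
    rw [e3]
    ring
  rw [Finset.sum_congr rfl e, Finset.sum_add_distrib, Zs, H]

noncomputable def Es (x : ℝ) (n : ℕ) : ℝ :=
  ∑ ν ∈ Finset.range n, (-1:ℝ)^ν * (D x n / (D x (ν+1) * D x (n-ν)))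

lemma Z_rec (x : ℝ) (hxD : ∀ i : ℕ, x + (i:ℝ) + 1 ≠ 0) (n : ℕ) :
    Zs x (n+1) = Zs x n + (-1:ℝ)^n/(n+1) + Es x n := by
  rw [Zs, Finset.sum_range_succ]
  have hlast : (-1:ℝ)^n * (D x (n+1) / (D x (n+1-1-n) * D x (n+1))) / (n+1)
      = (-1:ℝ)^n / (n+1) := by
    have e : n+1-1-n = 0 := by omega
    rw [e, show D x 0 = 1 from by simp [D], one_mul,
      div_self (D_ne hxD (n+1)), mul_one]
  rw [hlast]
  have hterm : ∀ ν ∈ Finset.range n,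
      (-1:ℝ)^ν * (D x (n+1) / (D x (n+1-1-ν) * D x (ν+1))) / (ν+1)
      = (-1:ℝ)^ν * (D x n / (D x (n-1-ν) * D x (ν+1))) / (ν+1)
        + (-1:ℝ)^ν * (D x n / (D x (ν+1) * D x (n-ν))) := by
    intro ν hν
    rw [Finset.mem_range] at hν
    have e0 : n+1-1-ν = n-ν := by omega
    have h1 : D x (n+1) = D x n * (x + n + 1) := D_succ x n
    have ecast : (x + ((n - 1 - ν : ℕ):ℝ) + 1) = x + (n:ℝ) - ν := by
      have e : n - 1 - ν = n - (ν+1) := by omega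
      rw [e, Nat.cast_sub (by omega : ν+1 ≤ n)]; push_cast; ring
    have h2 : D x (n-ν) = D x (n-1-ν) * (x + (n:ℝ) - ν) := by
      have e : n - ν = (n-1-ν) + 1 := by omega
      rw [e, D_succ, ecast]
    have hne1 : D x (n-1-ν) ≠ 0 := D_ne hxD _
    have hne2 : D x (ν+1) ≠ 0 := D_ne hxD _
    have hne3 : x + (n:ℝ) - ν ≠ 0 := by rw [← ecast]; exact hxD _
    have hne4 : ((ν:ℝ)+1) ≠ 0 := by positivity
    rw [e0, h1, h2]
    field_simp
    ring
  rw [Finset.sum_congr rfl hterm, Finset.sum_add_distrib, Zs, Es]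
  ring

lemma E_even (x : ℝ) (n : ℕ) (hn : Even n) : Es x n = 0 := by
  have h := Finset.sum_range_reflect
    (fun ν => (-1:ℝ)^ν * (D x n / (D x (ν+1) * D x (n-ν)))) n
  have e : ∀ ν ∈ Finset.range n,
      (-1:ℝ)^(n-1-ν) * (D x n / (D x ((n-1-ν)+1) * D x (n-(n-1-ν))))
      = - ((-1:ℝ)^ν * (D x n / (D x (ν+1) * D x (n-ν)))) := by
    intro ν hν
    rw [Finset.mem_range] at hν
    have e1 : n-1-ν+1 = n-ν := by omega
    have e2 : n-(n-1-ν) = ν+1 := by omega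
    have e3 : (-1:ℝ)^(n-1-ν) = -(-1:ℝ)^ν := by
      have hodd : Odd (n-1-ν+ν) := by
        obtain ⟨m, hm⟩ := hn
        have hh : n-1-ν+ν = n-1 := by omega
        rw [hh]
        exact ⟨m-1, by omega⟩
      have hthis : (-1:ℝ)^(n-1-ν) * (-1:ℝ)^ν = -1 := by
        rw [← pow_add]; exact Odd.neg_one_pow hodd
      have hB : (-1:ℝ)^ν * (-1:ℝ)^ν = 1 := by
        rw [← pow_add]; exact Even.neg_one_pow ⟨ν, rfl⟩
      calc (-1:ℝ)^(n-1-ν) = (-1:ℝ)^(n-1-ν) * ((-1:ℝ)^ν * (-1:ℝ)^ν) := by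
            rw [hB, mul_one]
        _ = ((-1:ℝ)^(n-1-ν) * (-1:ℝ)^ν) * (-1:ℝ)^ν := by ring
        _ = -(-1:ℝ)^ν := by rw [hthis]; ring
    rw [e1, e2, e3]
    ring
  rw [Finset.sum_congr rfl e, Finset.sum_neg_distrib] at h
  have hEs : Es x n = ∑ ν ∈ Finset.range n, (-1:ℝ)^ν * (D x n / (D x (ν+1) * D x (n-ν))) := rfl
  rw [hEs]
  linarith

lemma E_tel (x : ℝ) (hxD : ∀ i : ℕ, x + (i:ℝ) + 1 ≠ 0) (n : ℕ) :
    ∀ t, t ≤ n → (2*x + n + 1) *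
      (∑ ν ∈ Finset.range t, (-1:ℝ)^ν * (D x n / (D x (ν+1) * D x (n-ν))))
    = 1 - (-1:ℝ)^t * (x + t + 1) * (D x n / (D x (t+1) * D x (n-t))) := by
  intro t
  induction t with
  | zero =>
    intro _
    have hD1 : D x 1 = x + 1 := by simp [D]
    rw [Finset.sum_range_zero, mul_zero, hD1]
    have hne : D x n ≠ 0 := D_ne hxD n
    have hne2 : x + 1 ≠ 0 := by
      have := hxD 0; push_cast at this; simpa using this
    rw [Nat.sub_zero]
    push_cast
    field_simp
    ring
  | succ t iht =>
    intro ht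
    rw [Finset.sum_range_succ, mul_add, iht (by omega)]
    have ecast : (x + ((n - 1 - t : ℕ):ℝ) + 1) = x + (n:ℝ) - t := by
      have e : n - 1 - t = n - (t+1) := by omega
      rw [e, Nat.cast_sub (by omega : t+1 ≤ n)]; push_cast; ring
    have h2 : D x (n-t) = D x (n-1-t) * (x + (n:ℝ) - t) := by
      have e : n - t = (n-1-t) + 1 := by omega
      rw [e, D_succ, ecast]
    have h3 : D x (t+2) = D x (t+1) * (x + (t:ℝ) + 2) := by
      have := D_succ x (t+1)
      rw [this]; push_cast; ring
    have e4 : n - (t+1) = n-1-t := by omega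
    have hne1 : D x (n-1-t) ≠ 0 := D_ne hxD _
    have hne2 : D x (t+1) ≠ 0 := D_ne hxD _
    have hne3 : x + (n:ℝ) - t ≠ 0 := by rw [← ecast]; exact hxD _
    have hne5 : x + (t:ℝ) + 2 ≠ 0 := by
      have := hxD (t+1); push_cast at this
      intro hcon; exact this (by linarith)
    have hnD : D x n ≠ 0 := D_ne hxD n
    rw [e4, h2, h3]
    push_cast
    field_simp
    ring

lemma E_odd (x : ℝ) (hxD : ∀ i : ℕ, x + (i:ℝ) + 1 ≠ 0) (m : ℕ) :
    Es x (2*m+1) = 1/(x + m + 1) := by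
  have h := E_tel x hxD (2*m+1) (2*m+1) le_rfl
  have hEs : (∑ ν ∈ Finset.range (2*m+1), (-1:ℝ)^ν *
      (D x (2*m+1) / (D x (ν+1) * D x (2*m+1-ν)))) = Es x (2*m+1) := rfl
  rw [hEs] at h
  have hsub : 2*m+1-(2*m+1) = 0 := by omega
  rw [hsub] at h
  have hD0 : D x 0 = 1 := by simp [D]
  have hDsucc : D x (2*m+1+1) = D x (2*m+1) * (x + ((2*m+1:ℕ):ℝ) + 1) := D_succ x (2*m+1)
  have hpow : (-1:ℝ)^(2*m+1) = -1 := Odd.neg_one_pow ⟨m, by ring⟩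
  have hne : D x (2*m+1) ≠ 0 := D_ne hxD _
  have hne2 : x + ((2*m+1:ℕ):ℝ) + 1 ≠ 0 := hxD (2*m+1)
  rw [hD0, hDsucc, hpow] at h
  have hval : (D x (2*m+1) / (D x (2*m+1) * (x + ((2*m+1:ℕ):ℝ) + 1) * 1))
      = 1/(x + ((2*m+1:ℕ):ℝ) + 1) := by
    rw [mul_one, div_mul_eq_div_div, div_self hne]
  rw [hval] at h
  have h2 : (2*x + ((2*m+1:ℕ):ℝ) + 1) * Es x (2*m+1) = 2 := by
    rw [h]
    have hne2' : x + (2*(m:ℝ) + 1) + 1 ≠ 0 := by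
      intro hcon; apply hne2; push_cast; linarith
    field_simp
    ring
  have hm1 : x + (m:ℝ) + 1 ≠ 0 := hxD m
  have hcast : (2*x + ((2*m+1:ℕ):ℝ) + 1) = 2*(x + (m:ℝ) + 1) := by push_cast; ring
  rw [hcast] at h2
  field_simp
  linarith [h2]

lemma Z_val (x : ℝ) (hxD : ∀ i : ℕ, x + (i:ℝ) + 1 ≠ 0) :
    ∀ m : ℕ, Zs x (2*m) = Hx x m + H (2*m) - H m ∧
      Zs x (2*m+1) = H (2*m+1) + Hx x m - H m := by
  intro m
  induction m with
  | zero =>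
    constructor
    · simp [Zs, H, Hx]
    · have h1 : Zs x 1 = 1 := by
        rw [Zs, Finset.sum_range_one]
        have e : 1-1-0 = 0 := by omega
        rw [e]
        have hD0 : D x 0 = 1 := by simp [D]
        rw [hD0, one_mul, div_self (D_ne hxD 1)]
        norm_num
      have h2 : H 1 = 1 := by simp [H]
      simp only [Nat.mul_zero, Nat.zero_add, h1, h2]
      simp [H, Hx]
  | succ m ih =>
    obtain ⟨ih1, ih2⟩ := ih
    have key1 : Zs x (2*m+2) = Hx x (m+1) + H (2*m+2) - H (m+1) := by
      have e : 2*m+2 = (2*m+1)+1 := by omega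
      rw [e, Z_rec x hxD (2*m+1), ih2, E_odd x hxD m]
      have hpow : (-1:ℝ)^(2*m+1) = -1 := Odd.neg_one_pow ⟨m, by ring⟩
      rw [hpow]
      have hH1 : H (2*m+1+1) = H (2*m+1) + 1/(((2*m+1:ℕ):ℝ)+1) := H_succ (2*m+1)
      have hH2 : H (m+1) = H m + 1/((m:ℝ)+1) := H_succ m
      have hHx : Hx x (m+1) = Hx x m + 1/(x+(m:ℝ)+1) := by
        simp [Hx, Finset.sum_range_succ]
      have e2 : (2*m+1)+1 = 2*m+2 := by omega
      rw [← e2, hH1, hH2, hHx]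
      have hmne : ((m:ℝ)+1) ≠ 0 := by positivity
      have h2mne : (((2*m+1:ℕ):ℝ)+1) ≠ 0 := by positivity
      push_cast at *
      field_simp
      ring
    constructor
    · have e : 2*(m+1) = 2*m+2 := by omega
      rw [e, key1]
    · have e : 2*(m+1)+1 = (2*m+2)+1 := by omega
      rw [e, Z_rec x hxD (2*m+2), key1, E_even x (2*m+2) ⟨m+1, by omega⟩]
      have hpow : (-1:ℝ)^(2*m+2) = 1 := Even.neg_one_pow ⟨m+1, by omega⟩
      rw [hpow]
      have hH1 : H (2*m+2+1) = H (2*m+2) + 1/(((2*m+2:ℕ):ℝ)+1) := H_succ (2*m+2)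
      have e2 : (2*m+2)+1 = 2*(m+1)+1 := by omega
      have e3 : 2*(m+1) = 2*m+2 := by omega
      rw [hH1]
      push_cast
      ring

theorem stmt9 (x : ℝ) (hx : ∀ i : ℕ, 1 ≤ i → x + (i:ℝ) ≠ 0) (m : ℕ) :
    (∑ k ∈ Finset.range (2*m+1), (-1:ℝ)^k * ((2*m).choose k : ℝ) *
        (gch (2*x+2*(m:ℝ)+(k:ℝ)) k / gch (x+(k:ℝ)) k) * H k
      = Hx x m + 2 * H (2*m) - H m) ∧
    (∑ k ∈ Finset.range (2*m+2), (-1:ℝ)^k * ((2*m+1).choose k : ℝ) *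
        (gch (2*x+2*(m:ℝ)+1+(k:ℝ)) k / gch (x+(k:ℝ)) k) * H k
      = H m - 2 * H (2*m+1) - Hx x m) := by
  have hxD : ∀ i : ℕ, x + (i:ℝ) + 1 ≠ 0 := by
    intro i; have := hx (i+1) (by omega); push_cast at this
    intro hcon; apply this; linarith
  have hZ := Z_val x hxD m
  constructor
  · have conv : ∀ k ∈ Finset.range (2*m+1),
        (-1:ℝ)^k * ((2*m).choose k : ℝ) *
          (gch (2*x+2*(m:ℝ)+(k:ℝ)) k / gch (x+(k:ℝ)) k) * H k
        = (-1:ℝ)^k * ((2*m).choose k : ℝ) *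
          ((∏ i ∈ Finset.range k, (2*x + ((2*m:ℕ):ℝ) + i + 1)) / D x k) * H k := by
      intro k _
      have harg : (2*x+2*(m:ℝ)+(k:ℝ)) = 2*x + ((2*m:ℕ):ℝ) + (k:ℝ) := by push_cast; ring
      rw [harg, gch_ratio x hx (2*m) k]
    rw [Finset.sum_congr rfl conv, Ssum_val x hxD (2*m)]
    have hpow : (-1:ℝ)^(2*m) = 1 := Even.neg_one_pow ⟨m, by omega⟩
    rw [hpow, hZ.1]
    ring
  · have conv : ∀ k ∈ Finset.range (2*m+2),
        (-1:ℝ)^k * ((2*m+1).choose k : ℝ) *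
          (gch (2*x+2*(m:ℝ)+1+(k:ℝ)) k / gch (x+(k:ℝ)) k) * H k
        = (-1:ℝ)^k * ((2*m+1).choose k : ℝ) *
          ((∏ i ∈ Finset.range k, (2*x + ((2*m+1:ℕ):ℝ) + i + 1)) / D x k) * H k := by
      intro k _
      have harg : (2*x+2*(m:ℝ)+1+(k:ℝ)) = 2*x + ((2*m+1:ℕ):ℝ) + (k:ℝ) := by push_cast; ring
      rw [harg, gch_ratio x hx (2*m+1) k]
    rw [Finset.sum_congr rfl conv]
    have er : 2*m+2 = (2*m+1)+1 := by omega
    rw [er, Ssum_val x hxD (2*m+1)]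
    have hpow : (-1:ℝ)^(2*m+1) = -1 := Odd.neg_one_pow ⟨m, by ring⟩
    rw [hpow, hZ.2]
    ring
end

section
/- For all complex numbers a, b and every nonnegative integer n, the terminating Watson sum satisfies ∑_{k=0}^{n} [(a)_k (b)_k (-n)_k] / [k! ((1+a+b)/2)_k (-2n)_k] = [((1+a)/2)_n ((1+b)/2)_n] / [(1/2)_n ((1+a+b)/2)_n], where (x)_k = x(x+1)⋯(x+k-1) is the Pochhammer symbol, assuming no zero factors occur in denominators. -/
open Finset

noncomputable def poch (x : ℂ) (k : ℕ) : ℂ := ∏ i ∈ Finset.range k, (x + (i:ℂ))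

noncomputable def Fn (a b : ℂ) (n k : ℕ) : ℂ :=
  (poch a k * poch b k * poch (-(n:ℂ)) k) /
    ((Nat.factorial k : ℂ) * poch ((1+a+b)/2) k * poch (-2*(n:ℂ)) k)

noncomputable def Gg (a b : ℂ) (n k : ℕ) : ℂ :=
  (-2*(k:ℂ)*(2*(n:ℂ)+1)*((1+a+b)/2 + (k:ℂ) - 1) * Fn a b (n+1) k) / (2*(n:ℂ)+2 - (k:ℂ))

lemma poch_zero (x : ℂ) : poch x 0 = 1 := by simp [poch]

lemma poch_succ (x : ℂ) (k : ℕ) : poch x (k+1) = poch x k * (x + (k:ℂ)) := by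
  simp [poch, Finset.prod_range_succ]

lemma poch_succ' (x : ℂ) (k : ℕ) : poch x (k+1) = x * poch (x+1) k := by
  rw [poch, Finset.prod_range_succ']
  simp only [Nat.cast_zero, add_zero]
  rw [mul_comm]
  congr 1
  apply Finset.prod_congr rfl
  intro i _
  push_cast
  ring

lemma poch_shift (x : ℂ) (k : ℕ) : poch x k * (x + (k:ℂ)) = x * poch (x+1) k := by
  rw [← poch_succ, poch_succ']

lemma cast_sub_ne_zero {i j : ℕ} (h : i < j) : (i:ℂ) - (j:ℂ) ≠ 0 := by
  intro H
  have e : (i:ℂ) = (j:ℂ) := by linear_combination H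
  exact absurd (Nat.cast_inj.mp e) (by omega)

lemma poch_neg_nat_ne_zero {m k : ℕ} (h : k ≤ m) : poch (-(m:ℂ)) k ≠ 0 := by
  rw [poch]
  rw [Finset.prod_ne_zero_iff]
  intro i hi
  rw [Finset.mem_range] at hi
  intro H
  exact cast_sub_ne_zero (show i < m by omega) (by linear_combination H)

lemma poch_neg_self (n : ℕ) {k : ℕ} (h : n < k) : poch (-(n:ℂ)) k = 0 := by
  rw [poch]
  apply Finset.prod_eq_zero (Finset.mem_range.2 h)
  simp

lemma half_add_ne (i : ℕ) : (1/2 + (i:ℂ)) ≠ 0 := by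
  have e : (1/2 + (i:ℂ)) = ((1+2*i : ℕ):ℂ)/2 := by push_cast; ring
  rw [e]
  apply div_ne_zero
  · exact Nat.cast_ne_zero.2 (by omega)
  · norm_num

lemma poch_half_ne_zero (n : ℕ) : poch (1/2 : ℂ) n ≠ 0 := by
  rw [poch, Finset.prod_ne_zero_iff]
  exact fun i _ => half_add_ne i

set_option maxHeartbeats 3200000 in
lemma per (a b : ℂ) (n k : ℕ) (hk : k ≤ n)
    (hC : poch ((1+a+b)/2) k ≠ 0) (hC1 : poch ((1+a+b)/2) (k+1) ≠ 0) :
    (-((a+2*(n:ℂ)+1)*(b+2*(n:ℂ)+1))) * Fn a b n k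
      + (2*(n:ℂ)+1)*(a+b+2*(n:ℂ)+1) * Fn a b (n+1) k
    = Gg a b n (k+1) - Gg a b n k := by
  have hcK : (1+a+b)/2 + (k:ℂ) ≠ 0 := by
    intro H
    exact hC1 (by rw [poch_succ, H, mul_zero])
  have hf : ((Nat.factorial k : ℂ)) ≠ 0 := Nat.cast_ne_zero.2 (Nat.factorial_ne_zero k)
  have hQ : poch (-2*(n:ℂ)) k ≠ 0 := by
    have e : (-2*(n:ℂ)) = -((2*n : ℕ):ℂ) := by push_cast; ring
    rw [e]; exact poch_neg_nat_ne_zero (by omega)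
  have hQ1 : poch (-2*((n:ℂ)+1)) k ≠ 0 := by
    have e : (-2*((n:ℂ)+1)) = -((2*n+2 : ℕ):ℂ) := by push_cast; ring
    rw [e]; exact poch_neg_nat_ne_zero (by omega)
  have hn1 : ((n:ℂ)+1) ≠ 0 := by
    have e : ((n:ℂ)+1) = ((n+1 : ℕ):ℂ) := by push_cast; ring
    rw [e]; exact Nat.cast_ne_zero.2 (by omega)
  have h2n1 : (2*(n:ℂ)+1) ≠ 0 := by
    have e : (2*(n:ℂ)+1) = ((2*n+1 : ℕ):ℂ) := by push_cast; ring
    rw [e]; exact Nat.cast_ne_zero.2 (by omega)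
  have hk1 : ((k:ℂ)+1) ≠ 0 := by
    have e : ((k:ℂ)+1) = ((k+1 : ℕ):ℂ) := by push_cast; ring
    rw [e]; exact Nat.cast_ne_zero.2 (by omega)
  have h1 : ((k:ℂ) - (n:ℂ) - 1) ≠ 0 := by
    have e : ((k:ℂ) - (n:ℂ) - 1) = (k:ℂ) - ((n+1 : ℕ):ℂ) := by push_cast; ring
    rw [e]; exact cast_sub_ne_zero (by omega)
  have h2 : ((k:ℂ) - 2*(n:ℂ) - 1) ≠ 0 := by
    have e : ((k:ℂ) - 2*(n:ℂ) - 1) = (k:ℂ) - ((2*n+1 : ℕ):ℂ) := by push_cast; ring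
    rw [e]; exact cast_sub_ne_zero (by omega)
  have h3 : ((k:ℂ) - 2*(n:ℂ) - 2) ≠ 0 := by
    have e : ((k:ℂ) - 2*(n:ℂ) - 2) = (k:ℂ) - ((2*n+2 : ℕ):ℂ) := by push_cast; ring
    rw [e]; exact cast_sub_ne_zero (by omega)
  have h6 : (2*(n:ℂ) + 2 - (k:ℂ)) ≠ 0 := by
    intro H; exact h3 (by linear_combination -H)
  have h7 : (2*(n:ℂ) + 2 - ((k:ℂ)+1)) ≠ 0 := by
    intro H; exact h2 (by linear_combination -H)
  have h7' : (2*(n:ℂ) + 1 - (k:ℂ)) ≠ 0 := by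
    intro H; exact h2 (by linear_combination -H)
  have hE1 : poch (-((n:ℂ)+1)) k * ((k:ℂ) - (n:ℂ) - 1) = -((n:ℂ)+1) * poch (-(n:ℂ)) k := by
    have t := poch_shift (-((n:ℂ)+1)) k
    have e : (-((n:ℂ)+1)+1) = -(n:ℂ) := by ring
    rw [e] at t
    linear_combination t
  have hE2 : poch (-2*((n:ℂ)+1)) k * ((k:ℂ)-2*(n:ℂ)-2) * ((k:ℂ)-2*(n:ℂ)-1) = (2*(n:ℂ)+2)*(2*(n:ℂ)+1) * poch (-2*(n:ℂ)) k := by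
    have t1 := poch_shift (-2*((n:ℂ)+1)) k
    have e1 : (-2*((n:ℂ)+1)+1) = -2*(n:ℂ)-1 := by ring
    rw [e1] at t1
    have t2 := poch_shift (-2*(n:ℂ)-1) k
    have e2 : (-2*(n:ℂ)-1+1) = -2*(n:ℂ) := by ring
    rw [e2] at t2
    linear_combination ((k:ℂ)-2*(n:ℂ)-1) * t1 - (2*(n:ℂ)+2) * t2
  have hD : ((Nat.factorial k : ℂ) * poch ((1+a+b)/2) k * ((1+a+b)/2+(k:ℂ)) * poch (-2*((n:ℂ)+1)) k * ((n:ℂ)+1) * (2*(n:ℂ)+1) * ((k:ℂ)+1) * (2*(n:ℂ)+2-(k:ℂ)) * (2*(n:ℂ)+1-(k:ℂ)) * ((k:ℂ)-2*(n:ℂ)-2) * ((k:ℂ)-2*(n:ℂ)-1)) ≠ 0 := by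
    apply mul_ne_zero; apply mul_ne_zero; apply mul_ne_zero; apply mul_ne_zero
    apply mul_ne_zero; apply mul_ne_zero; apply mul_ne_zero; apply mul_ne_zero
    apply mul_ne_zero; apply mul_ne_zero
    all_goals first
      | exact hf | exact hC | exact hcK | exact hQ1 | exact hn1 | exact h2n1
      | exact hk1 | exact h6 | exact h7' | exact h3 | exact h2
  have E1 : poch a k * poch b k * poch (-(n:ℂ)) k / ((Nat.factorial k : ℂ) * poch ((1+a+b)/2) k * poch (-2*(n:ℂ)) k) = (poch a k * poch b k * poch (-((n:ℂ)+1)) k * ((n:ℂ)+1-(k:ℂ)) * ((1+a+b)/2+(k:ℂ)) * (2*(n:ℂ)+1)^2 * (2*(n:ℂ)+2) * ((k:ℂ)+1) * (2*(n:ℂ)+2-(k:ℂ)) * (2*(n:ℂ)+1-(k:ℂ))) / ((Nat.factorial k : ℂ) * poch ((1+a+b)/2) k * ((1+a+b)/2+(k:ℂ)) * poch (-2*((n:ℂ)+1)) k * ((n:ℂ)+1) * (2*(n:ℂ)+1) * ((k:ℂ)+1) * (2*(n:ℂ)+2-(k:ℂ)) * (2*(n:ℂ)+1-(k:ℂ))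 * ((k:ℂ)-2*(n:ℂ)-2) * ((k:ℂ)-2*(n:ℂ)-1)) := by
    rw [div_eq_div_iff (mul_ne_zero (mul_ne_zero hf hC) hQ) hD]
    linear_combination (poch a k * poch b k * ((Nat.factorial k : ℂ) * poch ((1+a+b)/2) k * ((1+a+b)/2+(k:ℂ)) * (2*(n:ℂ)+1) * ((k:ℂ)+1) * (2*(n:ℂ)+2-(k:ℂ)) * (2*(n:ℂ)+1-(k:ℂ))) * poch (-((n:ℂ)+1)) k * ((n:ℂ)+1-(k:ℂ))) * hE2
      + (poch a k * poch b k * ((Nat.factorial k : ℂ) * poch ((1+a+b)/2) k * ((1+a+b)/2+(k:ℂ)) * (2*(n:ℂ)+1) * ((k:ℂ)+1) * (2*(n:ℂ)+2-(k:ℂ)) * (2*(n:ℂ)+1-(k:ℂ))) * poch (-2*((n:ℂ)+1)) k * ((k:ℂ)-2*(n:ℂ)-2) * ((k:ℂ)-2*(n:ℂ)-1)) * hE1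
  have E2 : poch a k * poch b k * poch (-((n:ℂ)+1)) k / ((Nat.factorial k : ℂ) * poch ((1+a+b)/2) k * poch (-2*((n:ℂ)+1)) k) = (poch a k * poch b k * poch (-((n:ℂ)+1)) k * ((1+a+b)/2+(k:ℂ)) * ((n:ℂ)+1) * (2*(n:ℂ)+1) * ((k:ℂ)+1) * (2*(n:ℂ)+2-(k:ℂ)) * (2*(n:ℂ)+1-(k:ℂ)) * ((k:ℂ)-2*(n:ℂ)-2) * ((k:ℂ)-2*(n:ℂ)-1)) / ((Nat.factorial k : ℂ) * poch ((1+a+b)/2) k * ((1+a+b)/2+(k:ℂ)) * poch (-2*((n:ℂ)+1)) k * ((n:ℂ)+1) * (2*(n:ℂ)+1) * ((k:ℂ)+1) * (2*(n:ℂ)+2-(k:ℂ)) * (2*(n:ℂ)+1-(k:ℂ)) * ((k:ℂ)-2*(n:ℂ)-2) * ((k:ℂ)-2*(n:ℂ)-1)) := by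
    rw [div_eq_div_iff (mul_ne_zero (mul_ne_zero hf hC) hQ1) hD]
    ring
  have hm3den : (((k:ℂ) + 1) * (Nat.factorial k : ℂ) * (poch ((1+a+b)/2) k * ((1+a+b)/2 + (k:ℂ))) * (poch (-2*((n:ℂ)+1)) k * (-2 * ((n:ℂ) + 1) + (k:ℂ)))) ≠ 0 := by
    apply mul_ne_zero (mul_ne_zero (mul_ne_zero hk1 hf) (mul_ne_zero hC hcK))
    apply mul_ne_zero hQ1
    intro H; exact h3 (by linear_combination H)
  have E3 : (poch a k * (a + (k:ℂ)) * (poch b k * (b + (k:ℂ))) * (poch (-((n:ℂ)+1)) k * (-((n:ℂ) + 1) + (k:ℂ)))) / (((k:ℂ) + 1) * (Nat.factorial k : ℂ) * (poch ((1+a+b)/2) k * ((1+a+b)/2 + (k:ℂ))) * (poch (-2*((n:ℂ)+1)) k * (-2 * ((n:ℂ) + 1) + (k:ℂ)))) = (poch a k * (a+(k:ℂ)) * poch b k * (b+(k:ℂ)) * poch (-((n:ℂ)+1)) k * ((k:ℂ)-(n:ℂ)-1) * ((n:ℂ)+1) * (2*(n:ℂ)+1) * (2*(n:ℂ)+2-(k:ℂ))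 * (2*(n:ℂ)+1-(k:ℂ)) * ((k:ℂ)-2*(n:ℂ)-1)) / ((Nat.factorial k : ℂ) * poch ((1+a+b)/2) k * ((1+a+b)/2+(k:ℂ)) * poch (-2*((n:ℂ)+1)) k * ((n:ℂ)+1) * (2*(n:ℂ)+1) * ((k:ℂ)+1) * (2*(n:ℂ)+2-(k:ℂ)) * (2*(n:ℂ)+1-(k:ℂ)) * ((k:ℂ)-2*(n:ℂ)-2) * ((k:ℂ)-2*(n:ℂ)-1)) := by
    rw [div_eq_div_iff hm3den hD]
    ring
  have hfin : ∀ x K d A B P1 : ℂ, (2*x+2-(K+1)) ≠ 0 → (2*x+2-K) ≠ 0 → d ≠ 0 →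
      (-((a + 2*x + 1) * (b + 2*x + 1))) * ((A * B * P1 * (x+1-K) * ((1+a+b)/2+K) * (2*x+1)^2 * (2*x+2) * (K+1) * (2*x+2-K) * (2*x+1-K)) / d) + ((2*x+1) * (a+b+2*x+1)) * ((A * B * P1 * ((1+a+b)/2+K) * (x+1) * (2*x+1) * (K+1) * (2*x+2-K) * (2*x+1-K) * (K-2*x-2) * (K-2*x-1)) / d)
      = (-2 * (K + 1) * (2*x + 1) * ((1+a+b)/2 + (K + 1) - 1)) * ((A * (a+K) * B * (b+K) * P1 * (K-x-1) * (x+1) * (2*x+1) * (2*x+2-K) * (2*x+1-K) * (K-2*x-1)) / d) / (2*x+2-(K+1)) - (-2 * K * (2*x + 1) * ((1+a+b)/2 + K - 1)) * ((A * B * P1 * ((1+a+b)/2+K) * (x+1) * (2*x+1) * (K+1) * (2*x+2-K) * (2*x+1-K) * (K-2*x-2) * (K-2*x-1)) / d) / (2*x+2-K) := by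
    intro x K d A B P1 hw3 hw4 hd
    rw [← mul_div_assoc, ← mul_div_assoc, ← mul_div_assoc, ← mul_div_assoc, div_div, div_div,
        ← add_div, div_sub_div _ _ (mul_ne_zero hd hw3) (mul_ne_zero hd hw4),
        div_eq_div_iff hd (mul_ne_zero (mul_ne_zero hd hw3) (mul_ne_zero hd hw4))]
    ring
  simp only [Fn, Gg, Nat.factorial_succ, poch_succ]
  push_cast
  rw [E1, E2, E3]
  exact hfin (n:ℂ) (k:ℂ) _ (poch a k) (poch b k) (poch (-((n:ℂ)+1)) k) h7 h6 hD

lemma Fn_top (a b : ℂ) (n : ℕ) : Fn a b n (n+1) = 0 := by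
  rw [Fn, poch_neg_self n (by omega)]
  simp

lemma Gg_top (a b : ℂ) (n : ℕ) : Gg a b n (n+2) = 0 := by
  have hF : Fn a b (n+1) (n+2) = 0 := by
    rw [Fn, poch_neg_self (n+1) (by omega)]
    simp
  rw [Gg, hF, mul_zero, zero_div]

lemma Gg_zero (a b : ℂ) (n : ℕ) : Gg a b n 0 = 0 := by
  simp [Gg]

lemma perTop (a b : ℂ) (n : ℕ) :
    (-((a+2*(n:ℂ)+1)*(b+2*(n:ℂ)+1))) * Fn a b n (n+1)
      + (2*(n:ℂ)+1)*(a+b+2*(n:ℂ)+1) * Fn a b (n+1) (n+1)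
    = Gg a b n (n+2) - Gg a b n (n+1) := by
  have hn1 : ((n:ℂ)+1) ≠ 0 := by
    have e : ((n:ℂ)+1) = ((n+1 : ℕ):ℂ) := by push_cast; ring
    rw [e]; exact Nat.cast_ne_zero.2 (by omega)
  rw [Fn_top, Gg_top, mul_zero, zero_add, zero_sub, Gg]
  push_cast
  have hww : (2*(n:ℂ)+2-((n:ℂ)+1)) ≠ 0 := by
    intro H; exact hn1 (by linear_combination H)
  rw [← neg_div, eq_div_iff hww]
  ring

lemma step (a b : ℂ) (n : ℕ) (h : ∀ k ≤ n+1, poch ((1+a+b)/2) k ≠ 0) :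
    (2*(n:ℂ)+1)*(a+b+2*(n:ℂ)+1) * ∑ k ∈ Finset.range (n+2), Fn a b (n+1) k
      = ((a+2*(n:ℂ)+1)*(b+2*(n:ℂ)+1)) * ∑ k ∈ Finset.range (n+1), Fn a b n k := by
  have key : ∑ k ∈ Finset.range (n+2),
        ((-((a+2*(n:ℂ)+1)*(b+2*(n:ℂ)+1))) * Fn a b n k
          + (2*(n:ℂ)+1)*(a+b+2*(n:ℂ)+1) * Fn a b (n+1) k)
      = ∑ k ∈ Finset.range (n+2), (Gg a b n (k+1) - Gg a b n k) := by
    apply Finset.sum_congr rfl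
    intro k hk
    rw [Finset.mem_range] at hk
    rcases Nat.lt_or_ge k (n+1) with hlt | hge
    · exact per a b n k (by omega) (h k (by omega)) (h (k+1) (by omega))
    · have hkeq : k = n+1 := by omega
      subst hkeq
      exact perTop a b n
  rw [Finset.sum_range_sub (fun k => Gg a b n k), Gg_top, Gg_zero, sub_zero] at key
  rw [Finset.sum_add_distrib, ← Finset.mul_sum, ← Finset.mul_sum] at key
  rw [Finset.sum_range_succ (fun k => Fn a b n k) (n+1), Fn_top, add_zero] at key
  linear_combination key

lemma aux (a b : ℂ) (n : ℕ) (h : ∀ k ≤ n, poch ((1+a+b)/2) k ≠ 0) :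
    ∑ k ∈ Finset.range (n+1), Fn a b n k
      = (poch ((1+a)/2) n * poch ((1+b)/2) n) / (poch (1/2) n * poch ((1+a+b)/2) n) := by
  induction n with
  | zero => simp [Fn, poch, Nat.factorial]
  | succ m ih =>
    have h' : ∀ k ≤ m, poch ((1+a+b)/2) k ≠ 0 := fun k hk => h k (by omega)
    have ihv := ih h'
    have st := step a b m h
    rw [ihv] at st
    have hcm : poch ((1+a+b)/2) m ≠ 0 := h m (by omega)
    have hcm1 : poch ((1+a+b)/2) (m+1) ≠ 0 := h (m+1) le_rfl
    have hcK : (1+a+b)/2 + (m:ℂ) ≠ 0 := by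
      intro H; exact hcm1 (by rw [poch_succ, H, mul_zero])
    have h2m1 : (2*(m:ℂ)+1) ≠ 0 := by
      have e : (2*(m:ℂ)+1) = ((2*m+1 : ℕ):ℂ) := by push_cast; ring
      rw [e]; exact Nat.cast_ne_zero.2 (by omega)
    have habm : (a+b+2*(m:ℂ)+1) ≠ 0 := by
      intro H; exact hcK (by linear_combination H/2)
    have hhalf : poch (1/2:ℂ) m ≠ 0 := poch_half_ne_zero m
    have hhalfK : (1/2 + (m:ℂ) : ℂ) ≠ 0 := half_add_ne m
    have hden : poch (1/2:ℂ) m * poch ((1+a+b)/2) m ≠ 0 := mul_ne_zero hhalf hcm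
    have st2 : (2*(m:ℂ)+1)*(a+b+2*(m:ℂ)+1) * (∑ k ∈ Finset.range (m+2), Fn a b (m+1) k)
          * (poch (1/2:ℂ) m * poch ((1+a+b)/2) m)
        = ((a+2*(m:ℂ)+1)*(b+2*(m:ℂ)+1)) * (poch ((1+a)/2) m * poch ((1+b)/2) m) := by
      calc (2*(m:ℂ)+1)*(a+b+2*(m:ℂ)+1) * (∑ k ∈ Finset.range (m+2), Fn a b (m+1) k)
          * (poch (1/2:ℂ) m * poch ((1+a+b)/2) m)
          = ((2*(m:ℂ)+1)*(a+b+2*(m:ℂ)+1) * ∑ k ∈ Finset.range (m+2), Fn a b (m+1) k)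
          * (poch (1/2:ℂ) m * poch ((1+a+b)/2) m) := by ring
        _ = ((a+2*(m:ℂ)+1)*(b+2*(m:ℂ)+1)) * ((poch ((1+a)/2) m * poch ((1+b)/2) m) / (poch (1/2:ℂ) m * poch ((1+a+b)/2) m)) * (poch (1/2:ℂ) m * poch ((1+a+b)/2) m) := by rw [st]
        _ = ((a+2*(m:ℂ)+1)*(b+2*(m:ℂ)+1)) * ((poch ((1+a)/2) m * poch ((1+b)/2) m) / (poch (1/2:ℂ) m * poch ((1+a+b)/2) m) * (poch (1/2:ℂ) m * poch ((1+a+b)/2) m)) := by ring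
        _ = ((a+2*(m:ℂ)+1)*(b+2*(m:ℂ)+1)) * (poch ((1+a)/2) m * poch ((1+b)/2) m) := by
              rw [div_mul_cancel₀ _ hden]
    simp only [poch_succ]
    rw [eq_div_iff (mul_ne_zero (mul_ne_zero hhalf hhalfK) (mul_ne_zero hcm hcK))]
    apply mul_left_cancel₀ (mul_ne_zero h2m1 habm)
    linear_combination ((1/2+(m:ℂ))*((1+a+b)/2+(m:ℂ))) * st2

theorem stmt10 (a b : ℂ) (n : ℕ)
    (h : ∀ k ≤ n, poch ((1+a+b)/2) k ≠ 0) :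
    ∑ k ∈ Finset.range (n+1),
        (poch a k * poch b k * poch (-(n:ℂ)) k) /
          ((Nat.factorial k : ℂ) * poch ((1+a+b)/2) k * poch (-2*(n:ℂ)) k)
      = (poch ((1+a)/2) n * poch ((1+b)/2) n) /
          (poch (1/2) n * poch ((1+a+b)/2) n) := by
  have e : ∀ k : ℕ, (poch a k * poch b k * poch (-(n:ℂ)) k) /
          ((Nat.factorial k : ℂ) * poch ((1+a+b)/2) k * poch (-2*(n:ℂ)) k) = Fn a b n k :=
    fun k => rfl
  simp only [e]
  exact aux a b n h
end

section
/- For every nonnegative integer n and real x > -1 (or x avoiding negative integers), ∑_{k=0}^{n} C(2n-k, n) · C(x+k, k) = C(x+2n+1, n), where C(x+k, k) is the generalized binomial coefficient. -/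
open Finset

open Polynomial in
lemma descPochhammer_smeval_real (y : ℝ) (s : ℕ) :
    (descPochhammer ℤ s).smeval y = ∏ i ∈ Finset.range s, (y - (i:ℝ)) := by
  induction s with
  | zero => simp [smeval_one]
  | succ s ih =>
      rw [descPochhammer_succ_right, smeval_mul, ih, Finset.prod_range_succ]
      congr 1
      simp [smeval_sub, smeval_X, smeval_natCast]

lemma gch_eq_choose (y : ℝ) (s : ℕ) : gch y s = Ring.choose y s := by
  have h := Ring.descPochhammer_eq_factorial_smul_choose y s
  rw [descPochhammer_smeval_real] at h
  rw [gch, h, nsmul_eq_mul]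
  field_simp [Nat.factorial_ne_zero]

lemma choose_neg_eq (y : ℝ) (k : ℕ) :
    Ring.choose (-(y+1)) k = (-1)^k * Ring.choose (y + k) k := by
  rw [← gch_eq_choose, ← gch_eq_choose, gch, gch]
  rw [show (∏ i ∈ Finset.range k, (y + (k:ℝ) - (i:ℝ)))
      = ∏ i ∈ Finset.range k, (y + 1 + (i:ℝ)) by
    rw [← Finset.prod_range_reflect]
    refine Finset.prod_congr rfl fun i hi => ?_
    have : i < k := Finset.mem_range.mp hi
    rw [Nat.cast_sub (by omega : i ≤ k - 1), Nat.cast_sub (by omega : 1 ≤ k)]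
    push_cast
    ring]
  rw [show (∏ i ∈ Finset.range k, (-(y+1) - (i:ℝ)))
      = (-1)^k * ∏ i ∈ Finset.range k, (y + 1 + (i:ℝ)) by
    rw [show ((-1:ℝ))^k = ∏ i ∈ Finset.range k, (-1:ℝ) by simp, ← Finset.prod_mul_distrib]
    refine Finset.prod_congr rfl fun i hi => ?_
    ring]
  rw [mul_div_assoc]

lemma choose_natshift (n j : ℕ) : Ring.choose ((n:ℝ) + (j:ℝ)) j = ((n+j).choose j : ℝ) := by
  have : ((n:ℝ) + (j:ℝ)) = ((n + j : ℕ) : ℝ) := by push_cast; ring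
  rw [this, Ring.choose_natCast]

theorem stmt13 (x : ℝ) (hx : -1 < x) (n : ℕ) :
    ∑ k ∈ Finset.range (n+1), (((2*n-k).choose n : ℕ) : ℝ) * gch (x+(k:ℝ)) k
      = gch (x+2*(n:ℝ)+1) n := by
  have key : Ring.choose (-(x+1) + -((n:ℝ)+1)) n
      = ∑ ij ∈ Finset.HasAntidiagonal.antidiagonal n, Ring.choose (-(x+1)) ij.1 * Ring.choose (-((n:ℝ)+1)) ij.2 :=
    Ring.add_choose_eq n (Commute.all _ _)
  rw [Finset.Nat.sum_antidiagonal_eq_sum_range_succ_mk] at key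
  have hL : Ring.choose (-(x+1) + -((n:ℝ)+1)) n = (-1)^n * gch (x+2*(n:ℝ)+1) n := by
    have : (-(x+1) + -((n:ℝ)+1)) = -((x + (n:ℝ) + 1) + 1) := by ring
    rw [this, choose_neg_eq, ← gch_eq_choose]
    congr 2
    ring
  have hR : ∀ k ∈ Finset.range (n+1),
      Ring.choose (-(x+1)) k * Ring.choose (-((n:ℝ)+1)) (n-k)
        = (-1)^n * ((((2*n-k).choose n : ℕ) : ℝ) * gch (x+(k:ℝ)) k) := by
    intro k hk
    have hkn : k ≤ n := by have := Finset.mem_range.mp hk; omega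
    have h1 : Ring.choose (-(x+1)) k = (-1)^k * gch (x + (k:ℝ)) k := by
      rw [choose_neg_eq, ← gch_eq_choose]
    have h2 : Ring.choose (-((n:ℝ)+1)) (n-k) = (-1)^(n-k) * (((2*n-k).choose n : ℕ) : ℝ) := by
      rw [choose_neg_eq, choose_natshift]
      congr 2
      rw [show n + (n - k) = 2*n - k by omega, show n - k = (2*n - k) - n by omega]
      exact Nat.choose_symm (by omega)
    rw [h1, h2]
    calc (-1:ℝ)^k * gch (x+(k:ℝ)) k * ((-1)^(n-k) * (((2*n-k).choose n : ℕ) : ℝ))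
        = ((-1:ℝ)^k * (-1)^(n-k)) * ((((2*n-k).choose n : ℕ) : ℝ) * gch (x+(k:ℝ)) k) := by ring
      _ = (-1)^n * ((((2*n-k).choose n : ℕ) : ℝ) * gch (x+(k:ℝ)) k) := by
          rw [← pow_add, show k + (n-k) = n by omega]
  rw [Finset.sum_congr rfl hR, hL, ← Finset.mul_sum] at key
  have hne : ((-1:ℝ)^n) ≠ 0 := by positivity
  exact (mul_left_cancel₀ hne key).symm
end
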